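/- arXiv:2308.09587 — 7 statements merged into one kernel-verified Lean document; each statement's English description precedes it below -/
import Mathlib

section
/- Let A be a finite-dimensional algebra over an algebraically closed field K and let V₁,…,V_n ∈ mod(A) satisfy: (i) End_A(V_i) ≅ K[δ]/(δ^{m_i}) for some m_i ≥ 1; (ii) Hom_A(V_i, V_j) = 0 for i ≠ j; (iii) the direct sum V = V₁ ⊕ ⋯ ⊕ V_n satisfies τ_A(V) ≅ V. Then each V_i is semistable with respect to the weight θ = ⟨g(V), −⟩, i.e. θ(V_i) = 0 and θ(U) ≤ 0 for all submodules U ⊆ V_i; moreover V_i is θ-stable (θ(U) < 0 for all proper nonzero submodules U) whenever m_i = 1. -/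
universe u v

open Module

section Aux

variable {K A : Type u} [Field K] [Ring A] [Algebra K A]
variable {M N P : Type u}
  [AddCommGroup M] [Module A M] [Module K M] [IsScalarTower K A M]
  [AddCommGroup N] [Module A N] [Module K N] [IsScalarTower K A N] [SMulCommClass A K N]
  [AddCommGroup P] [Module A P] [Module K P] [IsScalarTower K A P] [SMulCommClass A K P]

omit [SMulCommClass A K N] [SMulCommClass A K P] in
theorem map_Ksmul (g : N →ₗ[A] P) (c : K) (y : N) : g (c • y) = c • g y := by
  rw [← algebraMap_smul A c y, g.map_smul, algebraMap_smul]

/-- Restriction of scalars as a `K`-linear map on hom spaces. -/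
def rslK : (M →ₗ[A] N) →ₗ[K] (M →ₗ[K] N) where
  toFun f :=
    { toFun := f
      map_add' := f.map_add
      map_smul' := fun c x => by
        show f (c • x) = c • f x
        rw [← algebraMap_smul A c x, f.map_smul, algebraMap_smul] }
  map_add' f g := rfl
  map_smul' c f := rfl

theorem rslK_injective : Function.Injective (rslK (K := K) (A := A) (M := M) (N := N)) := by
  intro f g h
  ext x
  exact congrArg (fun (t : M →ₗ[K] N) => t x) h

theorem homFinite [Module.Finite K M] [Module.Finite K N] :
    Module.Finite K (M →ₗ[A] N) :=
  FiniteDimensional.of_injective (rslK (A := A) (M := M) (N := N)) rslK_injective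

/-- Precomposition with an `A`-linear map, as a `K`-linear map. -/
def precompK (g : M →ₗ[A] N) : (N →ₗ[A] P) →ₗ[K] (M →ₗ[A] P) where
  toFun f := f.comp g
  map_add' f₁ f₂ := by ext x; rfl
  map_smul' c f := by ext x; rfl

/-- Postcomposition with an `A`-linear map, as a `K`-linear map. -/
def postcompK (g : N →ₗ[A] P) : (M →ₗ[A] N) →ₗ[K] (M →ₗ[A] P) where
  toFun f := g.comp f
  map_add' f₁ f₂ := by ext x; simp
  map_smul' c f := by
    ext x
    simp only [LinearMap.coe_comp, Function.comp_apply, LinearMap.smul_apply,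
      RingHom.id_apply]
    exact map_Ksmul g c (f x)

@[simp] theorem precompK_apply (g : M →ₗ[A] N) (f : N →ₗ[A] P) :
    precompK (K := K) g f = f.comp g := rfl

@[simp] theorem postcompK_apply (g : N →ₗ[A] P) (f : M →ₗ[A] N) :
    postcompK (K := K) g f = g.comp f := rfl

theorem postcompK_injective (g : N →ₗ[A] P) (hg : Function.Injective g) :
    Function.Injective (postcompK (K := K) (M := M) g) := by
  intro f₁ f₂ h
  ext x
  exact hg (congrArg (fun (t : M →ₗ[A] P) => t x) h)

theorem precompK_injective (g : M →ₗ[A] N) (hg : Function.Surjective g) :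
    Function.Injective (precompK (K := K) (P := P) g) := by
  intro f₁ f₂ h
  ext y
  obtain ⟨x, rfl⟩ := hg y
  exact congrArg (fun (t : M →ₗ[A] P) => t x) h

end Aux

section Key

variable {K A : Type u} [Field K] [Ring A] [Algebra K A]
variable {Vi U : Type u}
  [AddCommGroup Vi] [Module A Vi] [Module K Vi] [IsScalarTower K A Vi]
  [SMulCommClass A K Vi] [Module.Finite K Vi]
  [AddCommGroup U] [Module A U] [Module K U] [IsScalarTower K A U]
  [SMulCommClass A K U] [Module.Finite K U]

theorem key_ineq (m : ℕ) (hm : 1 ≤ m) (δ : Module.End A Vi)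
    (hnil : δ ^ m = 0) (hnz : δ ^ (m - 1) ≠ 0)
    (hgen : ∀ f : Module.End A Vi, ∃ c : Fin m → K,
      f = ∑ j : Fin m, c j • δ ^ (j : ℕ))
    (ι : U →ₗ[A] Vi) (hι : Function.Injective ι) :
    finrank K (Vi →ₗ[A] U) ≤ finrank K (U →ₗ[A] Vi) := by
  classical
  haveI : Module.Finite K (Vi →ₗ[A] U) := homFinite
  haveI : Module.Finite K (U →ₗ[A] Vi) := homFinite
  haveI : Module.Finite K (Module.End A Vi) := homFinite (A := A) (M := Vi) (N := Vi)
  -- a functional not vanishing on δ^(m-1)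
  have hex : ¬ ∀ φ : Module.Dual K (Module.End A Vi), φ (δ ^ (m - 1)) = 0 := by
    rw [Module.forall_dual_apply_eq_zero_iff K (δ ^ (m - 1))]
    exact hnz
  push_neg at hex
  obtain ⟨lam, hlam⟩ := hex
  have hpow : ∀ k, m ≤ k → δ ^ k = 0 := by
    intro k hk
    have : δ ^ k = δ ^ m * δ ^ (k - m) := by rw [← pow_add]; congr 1; omega
    rw [this, hnil, zero_mul]
  -- nondegeneracy
  have nondeg : ∀ g : Module.End A Vi, g ≠ 0 → ∃ h : Module.End A Vi,
      lam (h * g) ≠ 0 := by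
    intro g hg
    obtain ⟨c, rfl⟩ := hgen g
    have hcex : ∃ j : Fin m, c j ≠ 0 := by
      by_contra hc
      push_neg at hc
      exact hg (by simp [hc])
    set s : Finset (Fin m) := Finset.univ.filter (fun j => c j ≠ 0) with hs
    have hsne : s.Nonempty := by
      obtain ⟨j, hj⟩ := hcex
      exact ⟨j, by simp [hs, hj]⟩
    set j0 : Fin m := s.min' hsne with hj0
    have hj0mem : c j0 ≠ 0 := by
      have := s.min'_mem hsne
      simpa [hs] using this
    refine ⟨δ ^ (m - 1 - (j0 : ℕ)), ?_⟩
    have hmul : δ ^ (m - 1 - (j0 : ℕ)) * (∑ j : Fin m, c j • δ ^ (j : ℕ))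
        = c j0 • δ ^ (m - 1) := by
      rw [Finset.mul_sum]
      have hterm : ∀ j : Fin m,
          δ ^ (m - 1 - (j0 : ℕ)) * (c j • δ ^ (j : ℕ))
            = c j • δ ^ (m - 1 - (j0 : ℕ) + (j : ℕ)) := by
        intro j
        rw [mul_smul_comm, ← pow_add]
      calc (∑ j : Fin m, δ ^ (m - 1 - (j0 : ℕ)) * (c j • δ ^ (j : ℕ)))
          = ∑ j : Fin m, c j • δ ^ (m - 1 - (j0 : ℕ) + (j : ℕ)) := by
            exact Finset.sum_congr rfl (fun j _ => hterm j)
        _ = c j0 • δ ^ (m - 1 - (j0 : ℕ) + (j0 : ℕ)) := by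
            apply Finset.sum_eq_single
            · intro j _ hjne
              by_cases hcj : c j = 0
              · simp [hcj]
              · have hjs : j ∈ s := by simp [hs, hcj]
                have hle : j0 ≤ j := s.min'_le j hjs
                have hlt : (j0 : ℕ) < (j : ℕ) := by
                  exact lt_of_le_of_ne (Fin.le_iff_val_le_val.mp hle)
                    (fun hh => hjne (Fin.ext hh.symm))
                have hj0lt : (j0 : ℕ) < m := j0.isLt
                have hjlt : (j : ℕ) < m := j.isLt
                have : δ ^ (m - 1 - (j0 : ℕ) + (j : ℕ)) = 0 := by
                  apply hpow
                  omega
                rw [this, smul_zero]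
            · intro h
              exact absurd (Finset.mem_univ j0) h
        _ = c j0 • δ ^ (m - 1) := by
            have hj0lt : (j0 : ℕ) < m := j0.isLt
            have hne : m - 1 - (j0 : ℕ) + (j0 : ℕ) = m - 1 := by omega
            rw [hne]
    rw [hmul, map_smul, smul_eq_mul]
    exact mul_ne_zero hj0mem hlam
  -- the pairing map into the dual
  let T : (Vi →ₗ[A] U) →ₗ[K] Module.Dual K (U →ₗ[A] Vi) :=
    { toFun := fun f => lam.comp (precompK (K := K) (P := Vi) f)
      map_add' := fun f₁ f₂ => by
        apply LinearMap.ext; intro r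
        show lam (r ∘ₗ (f₁ + f₂)) = lam (r ∘ₗ f₁) + lam (r ∘ₗ f₂)
        rw [← map_add]
        congr 1
        apply LinearMap.ext; intro x
        simp
      map_smul' := fun c f => by
        apply LinearMap.ext; intro r
        show lam (r ∘ₗ (c • f)) = c • lam (r ∘ₗ f)
        rw [← map_smul]
        congr 1
        apply LinearMap.ext; intro x
        show r ((c • f) x) = (c • (r ∘ₗ f)) x
        simp only [LinearMap.smul_apply, LinearMap.coe_comp, Function.comp_apply]
        exact map_Ksmul r c (f x) }
  have hT : Function.Injective T := by
    rw [← LinearMap.ker_eq_bot, LinearMap.ker_eq_bot']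
    intro f hf
    by_contra hfne
    have hg : (ι.comp f : Vi →ₗ[A] Vi) ≠ 0 := by
      intro hz
      apply hfne
      ext x
      exact hι (by
        have := congrArg (fun (t : Vi →ₗ[A] Vi) => t x) hz
        simpa using this)
    obtain ⟨h, hh⟩ := nondeg (ι.comp f) hg
    apply hh
    have : h * (ι.comp f) = ((h.comp ι).comp f : Vi →ₗ[A] Vi) := by
      ext x; rfl
    rw [this]
    exact congrArg (fun (t : Module.Dual K (U →ₗ[A] Vi)) => t (h.comp ι)) hf
  calc finrank K (Vi →ₗ[A] U) ≤ finrank K (Module.Dual K (U →ₗ[A] Vi)) :=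
        LinearMap.finrank_le_finrank_of_injective hT
    _ = finrank K (U →ₗ[A] Vi) := Subspace.dual_finrank_eq

end Key

section Main

variable {K A : Type u} [Field K] [Ring A] [Algebra K A]

/-- Hom(⊕V, U) ≅ Hom(V_i, U) when U embeds in V_i and the V_j are Hom-orthogonal. -/
theorem finrank_pi_hom_eq (nn : ℕ) (V : Fin nn → Type u)
    [∀ i, AddCommGroup (V i)] [∀ i, Module A (V i)] [∀ i, Module K (V i)]
    [∀ i, IsScalarTower K A (V i)] [∀ i, SMulCommClass A K (V i)]
    [∀ i, Module.Finite K (V i)]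
    (horth : ∀ i j, i ≠ j → ∀ f : V i →ₗ[A] V j, f = 0)
    (i : Fin nn)
    (U : Type u) [AddCommGroup U] [Module A U] [Module K U]
    [IsScalarTower K A U] [SMulCommClass A K U] [Module.Finite K U]
    (ιU : U →ₗ[A] V i) (hι : Function.Injective ιU) :
    finrank K (((j : Fin nn) → V j) →ₗ[A] U) = finrank K (V i →ₗ[A] U) := by
  classical
  haveI : Module.Finite K ((j : Fin nn) → V j) := Module.Finite.pi
  haveI : Module.Finite K (((j : Fin nn) → V j) →ₗ[A] U) := homFinite
  haveI : Module.Finite K (V i →ₗ[A] U) := homFinite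
  apply le_antisymm
  · -- via precomposition with single i, injective thanks to horth
    apply LinearMap.finrank_le_finrank_of_injective
      (f := precompK (K := K) (P := U) (LinearMap.single A V i))
    rw [← LinearMap.ker_eq_bot, LinearMap.ker_eq_bot']
    intro f hf
    have hzero : ∀ (j : Fin nn) (v : V j), f (Pi.single j v) = 0 := by
      intro j v
      by_cases hj : j = i
      · subst hj
        exact congrArg (fun (t : V j →ₗ[A] U) => t v) hf
      · have h0 : ιU.comp (f.comp (LinearMap.single A V j)) = 0 := horth j i hj _
        have := congrArg (fun (t : V j →ₗ[A] V i) => t v) h0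
        simp only [LinearMap.comp_apply, LinearMap.zero_apply] at this
        exact hι (by simpa using this)
    apply LinearMap.ext; intro x
    have hx : (x : (j : Fin nn) → V j) = ∑ j : Fin nn, Pi.single j (x j) :=
      (Finset.univ_sum_single x).symm
    rw [LinearMap.zero_apply, hx, map_sum]
    exact Finset.sum_eq_zero fun j _ => hzero j (x j)
  · -- via precomposition with proj i, injective since proj i is surjective
    apply LinearMap.finrank_le_finrank_of_injective
      (f := precompK (K := K) (P := U) (LinearMap.proj (R := A) (φ := V) i))
    apply precompK_injective
    intro v
    exact ⟨Pi.single i v, Pi.single_eq_same i v⟩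

theorem finrank_hom_W_eq (nn : ℕ) (V : Fin nn → Type u)
    [∀ i, AddCommGroup (V i)] [∀ i, Module A (V i)] [∀ i, Module K (V i)]
    [∀ i, IsScalarTower K A (V i)] [∀ i, SMulCommClass A K (V i)]
    [∀ i, Module.Finite K (V i)]
    (W : Type u) [AddCommGroup W] [Module A W] [Module K W]
    [IsScalarTower K A W] [SMulCommClass A K W] [Module.Finite K W]
    (e : W ≃ₗ[A] ((i : Fin nn) → V i))
    (U : Type u) [AddCommGroup U] [Module A U] [Module K U]
    [IsScalarTower K A U] [SMulCommClass A K U] [Module.Finite K U] :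
    finrank K (U →ₗ[A] W) = finrank K (U →ₗ[A] ((j : Fin nn) → V j)) := by
  haveI : Module.Finite K ((j : Fin nn) → V j) := Module.Finite.pi
  haveI : Module.Finite K (U →ₗ[A] W) := homFinite
  haveI : Module.Finite K (U →ₗ[A] ((j : Fin nn) → V j)) := homFinite
  apply le_antisymm
  · exact LinearMap.finrank_le_finrank_of_injective
      (postcompK_injective (K := K) (M := U) (e : W →ₗ[A] ((j : Fin nn) → V j))
        e.injective)
  · exact LinearMap.finrank_le_finrank_of_injective
      (postcompK_injective (K := K) (M := U)
        (e.symm : ((j : Fin nn) → V j) →ₗ[A] W) e.symm.injective)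

theorem finrank_hom_single_le (nn : ℕ) (V : Fin nn → Type u)
    [∀ i, AddCommGroup (V i)] [∀ i, Module A (V i)] [∀ i, Module K (V i)]
    [∀ i, IsScalarTower K A (V i)] [∀ i, SMulCommClass A K (V i)]
    [∀ i, Module.Finite K (V i)] (i : Fin nn)
    (U : Type u) [AddCommGroup U] [Module A U] [Module K U]
    [IsScalarTower K A U] [SMulCommClass A K U] [Module.Finite K U] :
    finrank K (U →ₗ[A] V i) ≤ finrank K (U →ₗ[A] ((j : Fin nn) → V j)) := by
  classical
  haveI : Module.Finite K ((j : Fin nn) → V j) := Module.Finite.pi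
  haveI : Module.Finite K (U →ₗ[A] ((j : Fin nn) → V j)) := homFinite
  haveI : Module.Finite K (U →ₗ[A] V i) := homFinite
  apply LinearMap.finrank_le_finrank_of_injective
    (postcompK_injective (K := K) (M := U) (LinearMap.single A V i)
      (Pi.single_injective i))

end Main

section Main2

variable {K A : Type u} [Field K] [Ring A] [Algebra K A]

theorem finrank_hom_pi_le (nn : ℕ) (V : Fin nn → Type u)
    [∀ i, AddCommGroup (V i)] [∀ i, Module A (V i)] [∀ i, Module K (V i)]
    [∀ i, IsScalarTower K A (V i)] [∀ i, SMulCommClass A K (V i)]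
    [∀ i, Module.Finite K (V i)]
    (horth : ∀ i j, i ≠ j → ∀ f : V i →ₗ[A] V j, f = 0) (i : Fin nn) :
    finrank K ((V i) →ₗ[A] ((j : Fin nn) → V j)) ≤ finrank K (V i →ₗ[A] V i) := by
  classical
  haveI : Module.Finite K (V i →ₗ[A] V i) := homFinite
  haveI : Module.Finite K ((j : Fin nn) → V j) := Module.Finite.pi
  haveI : Module.Finite K ((V i) →ₗ[A] ((j : Fin nn) → V j)) := homFinite
  apply LinearMap.finrank_le_finrank_of_injective
    (f := postcompK (K := K) (M := V i) (LinearMap.proj (R := A) (φ := V) i))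
  rw [← LinearMap.ker_eq_bot, LinearMap.ker_eq_bot']
  intro f hf
  apply LinearMap.ext; intro x
  rw [LinearMap.zero_apply]
  funext j
  by_cases hj : j = i
  · subst hj
    exact congrArg (fun (t : V j →ₗ[A] V j) => t x) hf
  · have h0 : (LinearMap.proj (R := A) (φ := V) j).comp f = 0 := horth i j (fun h => hj h.symm) _
    exact congrArg (fun (t : V i →ₗ[A] V j) => t x) h0

theorem hom_eq_zero_of_m_one (Vi U : Type u)
    [AddCommGroup Vi] [Module A Vi] [Module K Vi] [IsScalarTower K A Vi]
    [SMulCommClass A K Vi] [Module.Finite K Vi]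
    [AddCommGroup U] [Module A U] [Module K U] [IsScalarTower K A U]
    [SMulCommClass A K U] [Module.Finite K U]
    (δ : Module.End A Vi)
    (hgen : ∀ f : Module.End A Vi, ∃ c : Fin 1 → K, f = ∑ j : Fin 1, c j • δ ^ (j : ℕ))
    (ι : U →ₗ[A] Vi) (hι : Function.Injective ι) (hns : ¬ Function.Surjective ι)
    (f : Vi →ₗ[A] U) : f = 0 := by
  obtain ⟨c, hc⟩ := hgen (ι.comp f)
  have hc' : ι.comp f = c 0 • (1 : Module.End A Vi) := by
    rw [hc, Fin.sum_univ_one]; norm_num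
  by_cases h0 : c 0 = 0
  · apply LinearMap.ext; intro x
    apply hι
    have := congrArg (fun (t : Vi →ₗ[A] Vi) => t x) hc'
    simpa [h0] using this
  · exfalso
    apply hns
    intro y
    refine ⟨f ((c 0)⁻¹ • y), ?_⟩
    have := congrArg (fun (t : Vi →ₗ[A] Vi) => t ((c 0)⁻¹ • y)) hc'
    simp only [LinearMap.comp_apply, LinearMap.smul_apply, Module.End.one_apply] at this
    rw [this, smul_smul, mul_inv_cancel₀ h0, one_smul]

end Main2

/-- Let A be a finite-dimensional algebra over an algebraically closed
field K and V₁,…,V_n ∈ mod(A) with (i) End_A(V_i) ≅ K[δ]/(δ^{m_i}); (ii)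
Hom_A(V_i,V_j) = 0 for i ≠ j; (iii) τ_A(V) ≅ V for V = V₁ ⊕ ⋯ ⊕ V_n (the module W
below is τ_A(V), and by the Auslander–Reiten formula the weight θ = ⟨g(V),−⟩ is
θ(U) = dim Hom_A(V,U) − dim Hom_A(U,τ_A(V)) = dim Hom_A(V,U) − dim Hom_A(U,W)).
Then each V_i is θ-semistable (θ(V_i) = 0 and θ(U) ≤ 0 for every submodule U of V_i,
submodules being represented by injective A-linear maps U → V_i), and θ-stable
(θ(U) < 0 for proper nonzero U) whenever m_i = 1. -/
theorem stmt_4 (K : Type u) [Field K] [IsAlgClosed K]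
    (A : Type u) [Ring A] [Algebra K A] [FiniteDimensional K A]
    (nn : ℕ) (V : Fin nn → Type u)
    [∀ i, AddCommGroup (V i)] [∀ i, Module A (V i)] [∀ i, Module K (V i)]
    [∀ i, IsScalarTower K A (V i)] [∀ i, SMulCommClass A K (V i)]
    [∀ i, Module.Finite K (V i)]
    (m : Fin nn → ℕ) (hm : ∀ i, 1 ≤ m i)
    -- (i): End_A(V_i) ≅ K[δ]/(δ^{m_i})
    (δ : ∀ i, Module.End A (V i))
    (hnil : ∀ i, δ i ^ m i = 0)
    (hnz : ∀ i, δ i ^ (m i - 1) ≠ 0)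
    (hgen : ∀ i (f : Module.End A (V i)), ∃ c : Fin (m i) → K,
        f = ∑ j : Fin (m i), c j • δ i ^ (j : ℕ))
    -- (ii): Hom-orthogonality
    (horth : ∀ i j, i ≠ j → ∀ f : V i →ₗ[A] V j, f = 0)
    -- (iii): τ_A(V) ≅ V; W stands for τ_A(V)
    (W : Type u) [AddCommGroup W] [Module A W] [Module K W]
    [IsScalarTower K A W] [SMulCommClass A K W] [Module.Finite K W]
    (hτ : Nonempty (W ≃ₗ[A] ((i : Fin nn) → V i))) :
    ∀ i : Fin nn,
      -- θ(V_i) = 0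
      ((finrank K (((j : Fin nn) → V j) →ₗ[A] V i) : ℤ)
          - (finrank K ((V i) →ₗ[A] W) : ℤ) = 0)
      -- θ(U) ≤ 0 for every submodule U ⊆ V_i
      ∧ (∀ (U : Type u) [AddCommGroup U] [Module A U] [Module K U]
            [IsScalarTower K A U] [SMulCommClass A K U] [Module.Finite K U]
            (ιU : U →ₗ[A] V i), Function.Injective ιU →
          (finrank K (((j : Fin nn) → V j) →ₗ[A] U) : ℤ)
            - (finrank K (U →ₗ[A] W) : ℤ) ≤ 0)
      -- θ(U) < 0 for proper nonzero submodules, when m_i = 1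
      ∧ (m i = 1 → ∀ (U : Type u) [AddCommGroup U] [Module A U] [Module K U]
            [IsScalarTower K A U] [SMulCommClass A K U] [Module.Finite K U]
            (ιU : U →ₗ[A] V i), Function.Injective ιU →
          ¬ Function.Surjective ιU → (∃ u : U, u ≠ 0) →
          (finrank K (((j : Fin nn) → V j) →ₗ[A] U) : ℤ)
            - (finrank K (U →ₗ[A] W) : ℤ) < 0) := by
  obtain ⟨e⟩ := hτ
  intro i
  -- dim Hom(V_i, Π V) = dim End(V_i)
  have hViPi : finrank K ((V i) →ₗ[A] ((j : Fin nn) → V j)) = finrank K (V i →ₗ[A] V i) :=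
    le_antisymm (finrank_hom_pi_le nn V horth i)
      (finrank_hom_single_le nn V i (V i))
  refine ⟨?_, ?_, ?_⟩
  · -- θ(V_i) = 0
    have h1 : finrank K (((j : Fin nn) → V j) →ₗ[A] V i) = finrank K (V i →ₗ[A] V i) :=
      finrank_pi_hom_eq nn V horth i (V i) LinearMap.id (fun a b h => h)
    have h2 : finrank K ((V i) →ₗ[A] W) = finrank K (V i →ₗ[A] V i) := by
      rw [finrank_hom_W_eq nn V W e (V i), hViPi]
    rw [h1, h2]
    ring
  · -- semistability
    intro U _ _ _ _ _ _ ιU hι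
    have h1 : finrank K (((j : Fin nn) → V j) →ₗ[A] U) = finrank K (V i →ₗ[A] U) :=
      finrank_pi_hom_eq nn V horth i U ιU hι
    have h2 : finrank K (U →ₗ[A] W) = finrank K (U →ₗ[A] ((j : Fin nn) → V j)) :=
      finrank_hom_W_eq nn V W e U
    have h3 : finrank K (V i →ₗ[A] U) ≤ finrank K (U →ₗ[A] V i) :=
      key_ineq (m i) (hm i) (δ i) (hnil i) (hnz i) (hgen i) ιU hι
    have h4 : finrank K (U →ₗ[A] V i) ≤ finrank K (U →ₗ[A] ((j : Fin nn) → V j)) :=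
      finrank_hom_single_le nn V i U
    rw [h1, h2]
    have := le_trans h3 h4
    omega
  · -- stability when m i = 1
    intro hm1 U _ _ _ _ _ _ ιU hι hns hne
    have h1 : finrank K (((j : Fin nn) → V j) →ₗ[A] U) = finrank K (V i →ₗ[A] U) :=
      finrank_pi_hom_eq nn V horth i U ιU hι
    have h2 : finrank K (U →ₗ[A] W) = finrank K (U →ₗ[A] ((j : Fin nn) → V j)) :=
      finrank_hom_W_eq nn V W e U
    -- Hom(V_i, U) = 0
    haveI : Module.Finite K (V i →ₗ[A] U) := homFinite
    haveI : Module.Finite K (U →ₗ[A] V i) := homFinite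
    have hzero : finrank K (V i →ₗ[A] U) = 0 := by
      have hsub : Subsingleton (V i →ₗ[A] U) := by
        constructor
        intro f g
        have hgen1 : ∀ f : Module.End A (V i), ∃ c : Fin 1 → K,
            f = ∑ j : Fin 1, c j • δ i ^ (j : ℕ) := by
          have h := hgen i
          rw [hm1] at h
          exact h
        have hf := hom_eq_zero_of_m_one (V i) U (δ i) hgen1 ιU hι hns f
        have hg := hom_eq_zero_of_m_one (V i) U (δ i) hgen1 ιU hι hns g
        rw [hf, hg]
      exact finrank_zero_of_subsingleton
    have hpos : 0 < finrank K (U →ₗ[A] V i) := by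
      have : Nontrivial (U →ₗ[A] V i) := by
        refine ⟨ιU, 0, fun h => ?_⟩
        obtain ⟨u, hu⟩ := hne
        apply hu
        apply hι
        rw [map_zero]
        exact congrArg (fun (t : U →ₗ[A] V i) => t u) h
      exact Module.finrank_pos
    have h4 : finrank K (U →ₗ[A] V i) ≤ finrank K (U →ₗ[A] ((j : Fin nn) → V j)) :=
      finrank_hom_single_le nn V i U
    rw [h1, h2, hzero]
    have := lt_of_lt_of_le hpos h4
    omega
end

section
/- Let Γ be a valued quiver of affine type ℬ𝒞̃₁, i.e. H = KQ/I with Q the quiver having vertices 1,2, an arrow α: 2 → 1, a loop ε at 1, and I = (ε⁴). For λ = (λ₁ : λ₂) ∈ ℙ¹, let V_λ be the representation with V(2) = K², V(1) = K⁴, V(ε) the nilpotent Jordan block of size 4, and V(α) the 4×2 matrix with columns (1,0,0,0)ᵗ and (0,λ₂,λ₁,0)ᵗ. Then for λ, μ ∈ ℙ¹: V_λ ≅ V_μ if and only if λ = ±μ. -/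
noncomputable section

open Matrix

variable (K : Type*) [Field K]

/-- The ε-action on V_λ(1) = K⁴ : the nilpotent Jordan block of size 4. -/
def J4 : Matrix (Fin 4) (Fin 4) K := !![0,0,0,0; 1,0,0,0; 0,1,0,0; 0,0,1,0]

/-- The α-action of V_λ : the 4×2 matrix with columns (1,0,0,0)ᵗ and (0,λ₂,λ₁,0)ᵗ,
for λ = (v 0 : v 1) ∈ ℙ¹. -/
def Aα (v : Fin 2 → K) : Matrix (Fin 4) (Fin 2) K := !![1, 0; 0, v 1; 0, v 0; 0, 0]

/-- Isomorphism of the representations V_λ, V_μ of H = KQ/(ε⁴) of type 𝔹ℂ̃₁: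
a pair of invertible linear maps commuting with the actions of ε and α. -/
def RepIsoBC1 (v w : Fin 2 → K) : Prop :=
  ∃ (P : Matrix (Fin 4) (Fin 4) K) (Q : Matrix (Fin 2) (Fin 2) K),
    IsUnit P ∧ IsUnit Q ∧ P * J4 K = J4 K * P ∧ P * Aα K v = Aα K w * Q

lemma vec2_ext {w u : Fin 2 → K} (h0 : w 0 = u 0) (h1 : w 1 = u 1) : w = u := by
  funext i; fin_cases i
  · exact h0
  · exact h1

lemma aux_smul (v : Fin 2 → K) (t : K) (ht : t ≠ 0) : RepIsoBC1 K v (t • v) := by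
  refine ⟨t • 1, !![t, 0; 0, 1], ?_, ?_, ?_, ?_⟩
  · rw [Matrix.isUnit_iff_isUnit_det]
    simp [Matrix.det_smul]
    exact ht
  · rw [Matrix.isUnit_iff_isUnit_det]
    simp [Matrix.det_fin_two_of]
    exact ht
  · rw [smul_mul_assoc, one_mul, mul_smul_comm, mul_one]
  · ext i j
    fin_cases i <;> fin_cases j <;>
      simp [Aα, Matrix.mul_apply, Fin.sum_univ_two, Fin.sum_univ_four, Matrix.smul_apply,
        Pi.smul_apply, smul_eq_mul, Matrix.one_apply, Matrix.vecHead, Matrix.vecTail] <;> ring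

lemma aux_neg (v : Fin 2 → K) (t : K) (ht : t ≠ 0) (hv1 : v 1 ≠ 0) :
    RepIsoBC1 K v (t • ![-(v 0), v 1]) := by
  refine ⟨!![t, 0, 0, 0;
            -2*t*v 0/v 1, t, 0, 0;
            2*t*(v 0)^2/(v 1)^2, -2*t*v 0/v 1, t, 0;
            0, 2*t*(v 0)^2/(v 1)^2, -2*t*v 0/v 1, t],
          !![t, 0; -2*v 0/(v 1)^2, 1], ?_, ?_, ?_, ?_⟩
  · rw [Matrix.isUnit_iff_isUnit_det]
    rw [isUnit_iff_ne_zero]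
    have hd : (!![t, 0, 0, 0;
            -2*t*v 0/v 1, t, 0, 0;
            2*t*(v 0)^2/(v 1)^2, -2*t*v 0/v 1, t, 0;
            0, 2*t*(v 0)^2/(v 1)^2, -2*t*v 0/v 1, t] : Matrix (Fin 4) (Fin 4) K).det = t^4 := by
      simp [Matrix.det_succ_row_zero, Fin.sum_univ_succ, Matrix.vecHead, Matrix.vecTail]
      ring
    rw [hd]
    exact pow_ne_zero 4 ht
  · rw [Matrix.isUnit_iff_isUnit_det]
    simp [Matrix.det_fin_two_of]
    exact ht
  · ext i j
    fin_cases i <;> fin_cases j <;>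
      simp [J4, Matrix.mul_apply, Fin.sum_univ_four, Matrix.vecHead, Matrix.vecTail]
  · ext i j
    fin_cases i <;> fin_cases j <;>
      simp [Aα, Matrix.mul_apply, Fin.sum_univ_two, Fin.sum_univ_four, Matrix.vecHead,
        Matrix.vecTail, Pi.smul_apply, smul_eq_mul] <;>
      field_simp <;> ring

/-- for λ = (v 0 : v 1), μ = (w 0 : w 1) ∈ ℙ¹, V_λ ≅ V_μ iff λ = ±μ,
where −(λ₁:λ₂) = (−λ₁:λ₂); equality in ℙ¹ being expressed by proportionality of the
nonzero representing vectors. -/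
theorem stmt_5 [IsAlgClosed K] [CharZero K] (v w : Fin 2 → K) (hv : v ≠ 0) (hw : w ≠ 0) :
    RepIsoBC1 K v w ↔ ∃ t : K, t ≠ 0 ∧ (w = t • v ∨ w = t • ![-(v 0), v 1]) := by
  constructor
  · rintro ⟨P, Q, hP, hQ, hJ, hA⟩
    have hc : ∀ i j, (P * J4 K) i j = (J4 K * P) i j := fun i j => by rw [hJ]
    have ha : ∀ i j, (P * Aα K v) i j = (Aα K w * Q) i j := fun i j => by rw [hA]
    have h01 := hc 0 0
    have h02 := hc 0 1
    have h11 := hc 1 0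
    have h12 := hc 1 1
    have h21 := hc 2 0
    have h22 := hc 2 1
    have h31 := hc 3 0
    have h32 := hc 3 1
    simp [Matrix.mul_apply, J4, Fin.sum_univ_four, Matrix.vecHead, Matrix.vecTail]
      at h01 h02 h11 h12 h21 h22 h31 h32
    have g00 := ha 0 0
    have g10 := ha 1 0
    have g20 := ha 2 0
    have g01 := ha 0 1
    have g11 := ha 1 1
    have g21 := ha 2 1
    have g31 := ha 3 1
    simp [Matrix.mul_apply, Aα, Fin.sum_univ_four, Fin.sum_univ_two, Matrix.vecHead,
      Matrix.vecTail] at g00 g10 g20 g01 g11 g21 g31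
    have hdetQ : Q 0 0 * Q 1 1 - Q 0 1 * Q 1 0 ≠ 0 := by
      have := (Matrix.isUnit_iff_isUnit_det Q).mp hQ
      rw [Matrix.det_fin_two] at this
      exact this.ne_zero
    have hq01 : Q 0 1 = 0 := by rw [h01, h02] at g01; simpa using g01.symm
    have hQ00 : Q 0 0 * Q 1 1 ≠ 0 := by simpa [hq01] using hdetQ
    have ha0 : Q 0 0 ≠ 0 := left_ne_zero_of_mul hQ00
    have hq11 : Q 1 1 ≠ 0 := right_ne_zero_of_mul hQ00
    rw [h11, h12, h01, g00] at g11
    rw [h21, h22, h11, g00, g10] at g21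
    rw [h31, h32, h21, g10, g20] at g31
    simp only [zero_mul, add_zero] at g11
    by_cases hv1 : v 1 = 0
    · have hv0 : v 0 ≠ 0 := by
        intro h0; apply hv; funext i; fin_cases i <;> simp [h0, hv1]
      have hw1 : w 1 = 0 := by
        have h' : w 1 * Q 1 1 = 0 := by rw [← g11, hv1, mul_zero]
        exact (mul_eq_zero.mp h').resolve_right hq11
      have hw0 : w 0 ≠ 0 := by
        intro h0; apply hw; funext i; fin_cases i <;> simp [h0, hw1]
      refine ⟨w 0 / v 0, div_ne_zero hw0 hv0, Or.inl (vec2_ext K ?_ ?_)⟩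
      · simp only [Pi.smul_apply, smul_eq_mul]; field_simp
      · simp only [Pi.smul_apply, smul_eq_mul]; rw [hw1, hv1, mul_zero]
    · have hw1 : w 1 ≠ 0 := by
        intro h1
        rw [h1, zero_mul] at g11
        exact hv1 ((mul_eq_zero.mp g11).resolve_left ha0)
      by_cases hS : w 0 * v 1 + w 1 * v 0 = 0
      · refine ⟨w 1 / v 1, div_ne_zero hw1 hv1, Or.inr ?_⟩
        funext i; fin_cases i
        · simp only [Pi.smul_apply, smul_eq_mul, Fin.zero_eta, Matrix.cons_val_zero]
          field_simp
          linear_combination hS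
        · simp only [Pi.smul_apply, smul_eq_mul, Fin.mk_one, Matrix.cons_val_one, Matrix.head_cons, Matrix.cons_val_zero]
          field_simp
      · have hq10 : Q 1 0 = 0 := by
          have h' : Q 1 0 * (w 0 * v 1 + w 1 * v 0) = 0 := by linear_combination g31
          exact (mul_eq_zero.mp h').resolve_right hS
        rw [hq10, mul_zero, zero_mul, zero_add] at g21
        refine ⟨Q 0 0 / Q 1 1, div_ne_zero ha0 hq11, Or.inl (vec2_ext K ?_ ?_)⟩
        · simp only [Pi.smul_apply, smul_eq_mul]
          field_simp
          linear_combination -g21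
        · simp only [Pi.smul_apply, smul_eq_mul]
          field_simp
          linear_combination -g11
  · rintro ⟨t, ht, h | h⟩
    · exact h ▸ aux_smul K v t ht
    · by_cases hv1 : v 1 = 0
      · have hw' : w = (-t) • v := by
          rw [h]; funext i; fin_cases i <;> simp [hv1] <;> ring
        exact hw' ▸ aux_smul K v (-t) (neg_ne_zero.mpr ht)
      · exact h ▸ aux_neg K v t ht hv1

end
end

section
/- With H = KQ/(ε⁴) of type ℬ𝒞̃₁ as above and V_λ defined for λ ∈ ℙ¹: for λ, μ ∈ ℙ¹ with λ ≠ ±μ, we have Hom_H(V_λ, V_μ) = 0; and for all λ ∈ 𝔸¹, End_H(V_λ) ≅ K. -/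
noncomputable section

open Matrix

variable (K : Type*) [Field K]

/-- for λ ≠ ±μ in ℙ¹ one has Hom_H(V_λ, V_μ) = 0 (every pair of linear
maps commuting with the ε- and α-actions is zero), and for λ ∈ 𝔸¹ (λ = (λ:1)) the
endomorphism algebra of V_λ is K (every endomorphism is a scalar). -/
theorem stmt_6 [IsAlgClosed K] [CharZero K] :
    (∀ (v w : Fin 2 → K), v ≠ 0 → w ≠ 0 →
      (¬ ∃ t : K, t ≠ 0 ∧ (w = t • v ∨ w = t • ![-(v 0), v 1])) →
      ∀ (P : Matrix (Fin 4) (Fin 4) K) (Q : Matrix (Fin 2) (Fin 2) K),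
        P * J4 K = J4 K * P → P * Aα K v = Aα K w * Q → P = 0 ∧ Q = 0)
    ∧ (∀ (lam : K) (P : Matrix (Fin 4) (Fin 4) K) (Q : Matrix (Fin 2) (Fin 2) K),
        P * J4 K = J4 K * P → P * Aα K ![lam, 1] = Aα K ![lam, 1] * Q →
        ∃ c : K, P = c • (1 : Matrix (Fin 4) (Fin 4) K)
          ∧ Q = c • (1 : Matrix (Fin 2) (Fin 2) K)) := by
  constructor
  · intro v w hv hw hne P Q h h2
    have e := Matrix.ext_iff.2 h
    have e00 := e 0 0
    have e01 := e 0 1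
    have e02 := e 0 2
    have e10 := e 1 0
    have e11 := e 1 1
    have e12 := e 1 2
    have e20 := e 2 0
    have e21 := e 2 1
    have e22 := e 2 2
    have e30 := e 3 0
    have e31 := e 3 1
    have e32 := e 3 2
    simp [Matrix.mul_apply, J4, Fin.sum_univ_four, Matrix.vecHead, Matrix.vecTail] at e00 e01 e02 e10 e11 e12 e20 e21 e22 e30 e31 e32
    have f := Matrix.ext_iff.2 h2
    have f00 := f 0 0
    have f10 := f 1 0
    have f20 := f 2 0
    have f30 := f 3 0
    have f01 := f 0 1
    have f11 := f 1 1
    have f21 := f 2 1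
    have f31 := f 3 1
    simp [Matrix.mul_apply, Aα, Fin.sum_univ_four, Fin.sum_univ_two, Matrix.vecHead, Matrix.vecTail] at f00 f10 f20 f30 f01 f11 f21 f31
    have hv' : v 0 ≠ 0 ∨ v 1 ≠ 0 := by
      by_contra hcon
      push_neg at hcon
      exact hv (funext fun i => by fin_cases i <;> simp [hcon.1, hcon.2])
    have hw' : w 0 ≠ 0 ∨ w 1 ≠ 0 := by
      by_contra hcon
      push_neg at hcon
      exact hw (funext fun i => by fin_cases i <;> simp [hcon.1, hcon.2])
    have hQ10 : Q 1 0 = 0 := by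
      by_contra hq
      have h1 : w 0 * Q 1 0 * v 1 + w 1 * Q 1 0 * v 0 = 0 := by
        rw [← f20, ← f10, ← e20, ← e31, ← e30]; exact f31
      have h2' : Q 1 0 * (w 0 * v 1 + w 1 * v 0) = 0 := by linear_combination h1
      have key : w 0 * v 1 + w 1 * v 0 = 0 := (mul_eq_zero.1 h2').resolve_left hq
      apply hne
      rcases eq_or_ne (v 1) 0 with hv1 | hv1
      · have hv0 : v 0 ≠ 0 := hv'.resolve_right (by simp [hv1])
        have hw1 : w 1 = 0 := by
          have hk := key
          rw [hv1, mul_zero, zero_add] at hk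
          exact (mul_eq_zero.1 hk).resolve_right hv0
        have hw0 : w 0 ≠ 0 := hw'.resolve_right (by simp [hw1])
        have ht : (-(w 0 / v 0)) ≠ 0 := neg_ne_zero.2 (div_ne_zero hw0 hv0)
        have h0e : w 0 = -(w 0 / v 0) * (-(v 0)) := by field_simp
        have h1e : w 1 = -(w 0 / v 0) * v 1 := by rw [hv1, hw1, mul_zero]
        exact ⟨-(w 0 / v 0), ht, Or.inr (funext fun i => by fin_cases i <;> simp [h0e.symm, h1e.symm])⟩
      · have ht : w 1 / v 1 ≠ 0 := by
          intro ht0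
          have hw1 : w 1 = 0 := (div_eq_zero_iff.1 ht0).resolve_right hv1
          have hw0 : w 0 = 0 := by
            have hk := key
            rw [hw1, zero_mul, add_zero] at hk
            exact (mul_eq_zero.1 hk).resolve_right hv1
          rcases hw' with h' | h' <;> [exact h' hw0; exact h' hw1]
        have h1e : w 1 = w 1 / v 1 * v 1 := by field_simp
        have h0e : w 0 = w 1 / v 1 * (-(v 0)) := by
          field_simp
          linear_combination key
        exact ⟨w 1 / v 1, ht, Or.inr (funext fun i => by fin_cases i <;> simp [h0e.symm, h1e.symm])⟩
    have hb : P 1 0 = 0 := by rw [f10, hQ10, mul_zero]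
    have hcc : P 2 0 = 0 := by rw [f20, hQ10, mul_zero]
    have g1 : P 0 0 * v 1 = w 1 * Q 1 1 := by
      have hk := f11
      rw [e10, e11, e00] at hk
      linear_combination hk
    have g2 : P 0 0 * v 0 = w 0 * Q 1 1 := by
      have hk := f21
      rw [e20, hb, e21, e10] at hk
      linear_combination hk
    have hQ11 : Q 1 1 = 0 := by
      by_contra hq
      have ha : P 0 0 ≠ 0 := by
        intro ha0
        rw [ha0, zero_mul] at g1 g2
        rcases hw' with h' | h'
        · exact hq ((mul_eq_zero.1 g2.symm).resolve_left h')
        · exact hq ((mul_eq_zero.1 g1.symm).resolve_left h')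
      apply hne
      refine ⟨P 0 0 / Q 1 1, div_ne_zero ha hq, Or.inl ?_⟩
      have h0e : w 0 = P 0 0 / Q 1 1 * v 0 := by
        field_simp
        linear_combination -g2
      have h1e : w 1 = P 0 0 / Q 1 1 * v 1 := by
        field_simp
        linear_combination -g1
      exact funext fun i => by fin_cases i <;> simp [h0e.symm, h1e.symm]
    have ha : P 0 0 = 0 := by
      rw [hQ11, mul_zero] at g1 g2
      rcases hv' with h' | h'
      · exact (mul_eq_zero.1 g2).resolve_right h'
      · exact (mul_eq_zero.1 g1).resolve_right h'
    have hP11 : P 1 1 = 0 := e10.trans ha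
    have hP12 : P 1 2 = 0 := e11.trans e00
    have hP13 : P 1 3 = 0 := e12.trans e01
    have hP21 : P 2 1 = 0 := e20.trans hb
    have hP22 : P 2 2 = 0 := e21.trans hP11
    have hP23 : P 2 3 = 0 := e22.trans hP12
    have hP31 : P 3 1 = 0 := e30.trans hcc
    have hP32 : P 3 2 = 0 := e31.trans hP21
    have hP33 : P 3 3 = 0 := e32.trans hP22
    have hQ00 : Q 0 0 = 0 := f00.symm.trans ha
    have hQ01 : Q 0 1 = 0 := by rw [← f01, e00, e01]; ring
    constructor
    · ext i j
      fin_cases i <;> fin_cases j <;> simp only [Matrix.zero_apply] <;> assumption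
    · ext i j
      fin_cases i <;> fin_cases j <;> simp only [Matrix.zero_apply] <;> assumption
  · intro lam P Q h h2
    have e := Matrix.ext_iff.2 h
    have e00 := e 0 0
    have e01 := e 0 1
    have e02 := e 0 2
    have e10 := e 1 0
    have e11 := e 1 1
    have e12 := e 1 2
    have e20 := e 2 0
    have e21 := e 2 1
    have e22 := e 2 2
    have e30 := e 3 0
    have e31 := e 3 1
    have e32 := e 3 2
    simp [Matrix.mul_apply, J4, Fin.sum_univ_four, Matrix.vecHead, Matrix.vecTail] at e00 e01 e02 e10 e11 e12 e20 e21 e22 e30 e31 e32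
    have f := Matrix.ext_iff.2 h2
    have f00 := f 0 0
    have f10 := f 1 0
    have f20 := f 2 0
    have f30 := f 3 0
    have f01 := f 0 1
    have f11 := f 1 1
    have f21 := f 2 1
    simp [Matrix.mul_apply, Aα, Fin.sum_univ_four, Fin.sum_univ_two, Matrix.vecHead, Matrix.vecTail] at f00 f10 f20 f30 f01 f11 f21
    have hQ11 : Q 1 1 = P 0 0 := by rw [← f11, e10, e11, e00]; ring
    have hb : P 1 0 = 0 := by
      have hk := f21
      rw [e20, e21, e10, hQ11] at hk
      linear_combination hk
    have hQ10 : Q 1 0 = 0 := f10.symm.trans hb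
    have hcc : P 2 0 = 0 := by rw [f20, hQ10, mul_zero]
    have hQ01 : Q 0 1 = 0 := by rw [← f01, e00, e01]; ring
    have hQ00 : Q 0 0 = P 0 0 := f00.symm
    have hd2 : P 2 2 = P 0 0 := e21.trans e10
    have hd3 : P 3 3 = P 0 0 := e32.trans hd2
    have hP12 : P 1 2 = 0 := e11.trans e00
    have hP13 : P 1 3 = 0 := e12.trans e01
    have hP21 : P 2 1 = 0 := e20.trans hb
    have hP23 : P 2 3 = 0 := e22.trans hP12
    have hP31 : P 3 1 = 0 := e30.trans hcc
    have hP32 : P 3 2 = 0 := e31.trans hP21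
    refine ⟨P 0 0, ?_, ?_⟩
    · ext i j
      fin_cases i <;> fin_cases j <;> simp [Matrix.one_apply] <;> assumption
    · ext i j
      fin_cases i <;> fin_cases j <;> simp [Matrix.one_apply] <;> assumption

end
end

section
/- With H of type ℬ𝒞̃₁ as above, each V_λ for λ ∈ 𝔸¹ is stable with respect to the defect ∂: explicitly, dim V_λ(1) = 2·dim V_λ(2), and every proper nonzero submodule U ⊂ V_λ satisfies 2·dim U(2) < dim U(1). -/
noncomputable section

open Matrix

variable (K : Type*) [Field K]

lemma J4_apply (w : Fin 4 → K) : (J4 K).mulVec w = ![0, w 0, w 1, w 2] := by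
  funext i
  fin_cases i <;> simp [J4, mulVec, dotProduct, Fin.sum_univ_four]

lemma Aα_apply (lam : K) (y : Fin 2 → K) :
    (Aα K ![lam, 1]).mulVec y = ![y 0, y 1, lam * y 1, 0] := by
  funext i
  fin_cases i <;> simp [Aα, mulVec, dotProduct, Fin.sum_univ_two]

lemma rank_ge {n : ℕ} (U : Submodule K (Fin 4 → K)) (v : Fin n → (Fin 4 → K))
    (hv : ∀ i, v i ∈ U) (hli : LinearIndependent K v) : n ≤ Module.finrank K U := by
  have hle : Submodule.span K (Set.range v) ≤ U :=
    Submodule.span_le.mpr (Set.range_subset_iff.mpr hv)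
  have := Submodule.finrank_mono hle
  rwa [finrank_span_eq_card hli, Fintype.card_fin] at this

/-- for λ ∈ 𝔸¹ the module V_λ is ∂-stable: dim V_λ(1) = 2·dim V_λ(2),
and every proper nonzero submodule (U₁ ⊆ K⁴, U₂ ⊆ K² invariant under the ε- and
α-actions) satisfies 2·dim U₂ < dim U₁. -/
theorem stmt_7 [IsAlgClosed K] [CharZero K] (lam : K) :
    Module.finrank K (Fin 4 → K) = 2 * Module.finrank K (Fin 2 → K) ∧
    ∀ (U1 : Submodule K (Fin 4 → K)) (U2 : Submodule K (Fin 2 → K)),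
      (∀ x ∈ U1, (J4 K).mulVec x ∈ U1) →
      (∀ y ∈ U2, (Aα K ![lam, 1]).mulVec y ∈ U1) →
      ¬(U1 = ⊥ ∧ U2 = ⊥) → ¬(U1 = ⊤ ∧ U2 = ⊤) →
      2 * Module.finrank K U2 < Module.finrank K U1 := by
  refine ⟨by simp, ?_⟩
  intro U1 U2 hJ hA hnbot hntop
  by_cases h2b : U2 = ⊥
  · have hU1 : U1 ≠ ⊥ := fun h => hnbot ⟨h, h2b⟩
    have h1 : 0 < Module.finrank K U1 :=
      Module.finrank_pos_iff.mpr (Submodule.nontrivial_iff_ne_bot.mpr hU1)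
    rw [h2b, finrank_bot, mul_zero]
    exact h1
  by_cases h2t : U2 = ⊤
  · exfalso
    have he : (![1, 0] : Fin 2 → K) ∈ U2 := h2t ▸ Submodule.mem_top
    have h0 : (![1, 0, 0, 0] : Fin 4 → K) ∈ U1 := by
      have := hA _ he; rw [Aα_apply] at this; simpa using this
    have h1 : (![0, 1, 0, 0] : Fin 4 → K) ∈ U1 := by
      have := hJ _ h0; rw [J4_apply] at this; simpa using this
    have h2 : (![0, 0, 1, 0] : Fin 4 → K) ∈ U1 := by
      have := hJ _ h1; rw [J4_apply] at this; simpa using this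
    have h3 : (![0, 0, 0, 1] : Fin 4 → K) ∈ U1 := by
      have := hJ _ h2; rw [J4_apply] at this; simpa using this
    have hli : LinearIndependent K
        (![![1,0,0,0], ![0,1,0,0], ![0,0,1,0], ![0,0,0,1]] : Fin 4 → Fin 4 → K) := by
      rw [Fintype.linearIndependent_iff]
      intro g hg
      simp only [Fin.sum_univ_four] at hg
      have e0 := congrFun hg 0
      have e1 := congrFun hg 1
      have e2 := congrFun hg 2
      have e3 := congrFun hg 3
      simp at e0 e1 e2 e3
      intro i; fin_cases i <;> assumption
    have h4 : 4 ≤ Module.finrank K U1 := by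
      apply rank_ge K U1 _ _ hli
      intro i; fin_cases i <;> assumption
    have hle : Module.finrank K U1 ≤ 4 := by
      simpa using Submodule.finrank_le U1
    have : U1 = ⊤ := Submodule.eq_top_of_finrank_eq (by simp; omega)
    exact hntop ⟨this, h2t⟩
  · -- U2 ≠ ⊥, ≠ ⊤ : finrank U2 ≤ 1 and finrank U1 ≥ 3
    have h2lt : Module.finrank K U2 < 2 := by
      have := Submodule.finrank_lt h2t
      simpa using this
    obtain ⟨y, hy, hy0⟩ := (Submodule.ne_bot_iff U2).mp h2b
    have hu : (![y 0, y 1, lam * y 1, 0] : Fin 4 → K) ∈ U1 := by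
      have := hA _ hy; rwa [Aα_apply] at this
    have h3le : 3 ≤ Module.finrank K U1 := by
      by_cases ha : y 0 = 0
      · have hb : y 1 ≠ 0 := by
          intro hb; apply hy0; funext i; fin_cases i <;> simp [ha, hb]
        have hu' : (![0, y 1, lam * y 1, 0] : Fin 4 → K) ∈ U1 := by rwa [ha] at hu
        have hv1 : (![0, 0, y 1, lam * y 1] : Fin 4 → K) ∈ U1 := by
          have := hJ _ hu'; rw [J4_apply] at this; simpa using this
        have hv2 : (![0, 0, 0, y 1] : Fin 4 → K) ∈ U1 := by
          have := hJ _ hv1; rw [J4_apply] at this; simpa using this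
        have hli : LinearIndependent K
            (![![0, y 1, lam * y 1, 0], ![0, 0, y 1, lam * y 1], ![0, 0, 0, y 1]] :
              Fin 3 → Fin 4 → K) := by
          rw [Fintype.linearIndependent_iff]
          intro g hg
          simp only [Fin.sum_univ_three] at hg
          have e1 := congrFun hg 1
          have e2 := congrFun hg 2
          have e3 := congrFun hg 3
          simp at e1 e2 e3
          have g0 : g 0 = 0 := e1.resolve_right hb
          simp [g0] at e2
          have g1 : g 1 = 0 := e2.resolve_right hb
          simp [g0, g1] at e3
          have g2 : g 2 = 0 := e3.resolve_right hb
          intro i; fin_cases i <;> assumption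
        apply rank_ge K U1 _ _ hli
        intro i; fin_cases i <;> assumption
      · have hv1 : (![0, y 0, y 1, lam * y 1] : Fin 4 → K) ∈ U1 := by
          have := hJ _ hu; rw [J4_apply] at this; simpa using this
        have hv2 : (![0, 0, y 0, y 1] : Fin 4 → K) ∈ U1 := by
          have := hJ _ hv1; rw [J4_apply] at this; simpa using this
        have hv3 : (![0, 0, 0, y 0] : Fin 4 → K) ∈ U1 := by
          have := hJ _ hv2; rw [J4_apply] at this; simpa using this
        have hli : LinearIndependent K
            (![![0, y 0, y 1, lam * y 1], ![0, 0, y 0, y 1], ![0, 0, 0, y 0]] :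
              Fin 3 → Fin 4 → K) := by
          rw [Fintype.linearIndependent_iff]
          intro g hg
          simp only [Fin.sum_univ_three] at hg
          have e1 := congrFun hg 1
          have e2 := congrFun hg 2
          have e3 := congrFun hg 3
          simp at e1 e2 e3
          have g0 : g 0 = 0 := e1.resolve_right ha
          simp [g0] at e2
          have g1 : g 1 = 0 := e2.resolve_right ha
          simp [g0, g1] at e3
          have g2 : g 2 = 0 := e3.resolve_right ha
          intro i; fin_cases i <;> assumption
        apply rank_ge K U1 _ _ hli
        intro i; fin_cases i <;> assumption
    omega


end
end

section
/- Let H = KQ/(ε⁴) of type ℬ𝒞̃₁. The representation V̄_∞ with V(2)=K, V(1)=K², V(ε) the nilpotent 2×2 Jordan block, and V(α) = (1,0)ᵗ is ∂-stable, and there is a non-split short exact sequence 0 → V̄_∞ → V_∞ → V̄_∞ → 0, where V_∞ = V_{(1:0)}; in particular V_∞ is ∂-semistable but not ∂-stable. -/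
noncomputable section

open Matrix

variable (K : Type*) [Field K]

/-- The ε-action on V̄_∞(1) = K² : the nilpotent Jordan block of size 2. -/
def J2 : Matrix (Fin 2) (Fin 2) K := !![0,0; 1,0]

/-- The α-action of V̄_∞ : the column (1,0)ᵗ. -/
def aInf : Matrix (Fin 2) (Fin 1) K := !![1; 0]

theorem part1 (U1 : Submodule K (Fin 2 → K)) (U2 : Submodule K (Fin 1 → K))
    (hJ : ∀ x ∈ U1, (J2 K).mulVec x ∈ U1) (ha : ∀ y ∈ U2, (aInf K).mulVec y ∈ U1)
    (hbot : ¬(U1 = ⊥ ∧ U2 = ⊥)) (htop : ¬(U1 = ⊤ ∧ U2 = ⊤)) :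
    2 * Module.finrank K U2 < Module.finrank K U1 := by
  by_cases h2 : U2 = ⊥
  · subst h2
    have h1 : U1 ≠ ⊥ := fun h => hbot ⟨h, rfl⟩
    have : 0 < Module.finrank K U1 := by
      rw [Module.finrank_pos_iff]; exact Submodule.nontrivial_iff_ne_bot.mpr h1
    simpa using this
  · exfalso
    obtain ⟨v, hv, hv0⟩ := Submodule.exists_mem_ne_zero_of_ne_bot h2
    have hv00 : v 0 ≠ 0 := by
      intro h; apply hv0; funext i; fin_cases i; exact h
    -- e0 ∈ U1
    have he0 : (![1,0] : Fin 2 → K) ∈ U1 := by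
      have := U1.smul_mem (v 0)⁻¹ (ha v hv)
      convert this using 1
      funext i; fin_cases i <;>
        simp [aInf, Matrix.mulVec, dotProduct, Fin.sum_univ_succ, inv_mul_cancel₀ hv00]
    have he1 : (![0,1] : Fin 2 → K) ∈ U1 := by
      have := hJ _ he0
      convert this using 1
      funext i; fin_cases i <;>
        simp [J2, Matrix.mulVec, dotProduct, Fin.sum_univ_succ]
    apply htop
    constructor
    · rw [eq_top_iff]; intro x _
      have : x = x 0 • ![1,0] + x 1 • ![0,1] := by
        funext i; fin_cases i <;> simp
      rw [this]
      exact U1.add_mem (U1.smul_mem _ he0) (U1.smul_mem _ he1)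
    · rw [eq_top_iff]; intro y _
      have : y = (y 0 * (v 0)⁻¹) • v := by
        funext i; fin_cases i; simp [mul_assoc, inv_mul_cancel₀ hv00]
      rw [this]; exact U2.smul_mem _ hv

theorem part3 (U1 : Submodule K (Fin 4 → K)) (U2 : Submodule K (Fin 2 → K))
    (hJ : ∀ x ∈ U1, (J4 K).mulVec x ∈ U1)
    (ha : ∀ y ∈ U2, (Aα K ![1, 0]).mulVec y ∈ U1) :
    2 * Module.finrank K U2 ≤ Module.finrank K U1 := by
  by_cases h2 : U2 = ⊥
  · subst h2; simp
  by_cases h2t : U2 = ⊤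
  · -- then U1 = ⊤
    have mem : ∀ y : Fin 2 → K, (Aα K ![1, 0]).mulVec y ∈ U1 := fun y =>
      ha y (h2t ▸ Submodule.mem_top)
    have he0 : (![1,0,0,0] : Fin 4 → K) ∈ U1 := by
      have := mem ![1,0]
      convert this using 1
      funext i; fin_cases i <;> simp [Aα, Matrix.mulVec, dotProduct, Fin.sum_univ_succ]
    have he2 : (![0,0,1,0] : Fin 4 → K) ∈ U1 := by
      have := mem ![0,1]
      convert this using 1
      funext i; fin_cases i <;> simp [Aα, Matrix.mulVec, dotProduct, Fin.sum_univ_succ]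
    have he1 : (![0,1,0,0] : Fin 4 → K) ∈ U1 := by
      have := hJ _ he0
      convert this using 1
      funext i; fin_cases i <;> simp [J4, Matrix.mulVec, dotProduct, Fin.sum_univ_succ]
    have he3 : (![0,0,0,1] : Fin 4 → K) ∈ U1 := by
      have := hJ _ he2
      convert this using 1
      funext i; fin_cases i <;> simp [J4, Matrix.mulVec, dotProduct, Fin.sum_univ_succ]
    have h1t : U1 = ⊤ := by
      rw [eq_top_iff]; intro x _
      have : x = x 0 • ![1,0,0,0] + x 1 • ![0,1,0,0] + x 2 • ![0,0,1,0] + x 3 • ![0,0,0,1] := by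
        funext i; fin_cases i <;> simp
      rw [this]
      exact U1.add_mem (U1.add_mem (U1.add_mem (U1.smul_mem _ he0) (U1.smul_mem _ he1))
        (U1.smul_mem _ he2)) (U1.smul_mem _ he3)
    rw [h1t, h2t]
    simp [Module.finrank_fin_fun]
  · -- U2 proper nonzero: finrank U2 ≤ 1, finrank U1 ≥ 2
    have hle : Module.finrank K U2 ≤ 1 := by
      have := Submodule.finrank_lt (K := K) h2t
      simpa [Module.finrank_fin_fun] using Nat.lt_succ_iff.mp (by simpa using this)
    obtain ⟨v, hv, hv0⟩ := Submodule.exists_mem_ne_zero_of_ne_bot h2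
    set w : Fin 4 → K := ![v 0, 0, v 1, 0] with hw
    have hwU : w ∈ U1 := by
      have := ha v hv
      convert this using 1
      funext i; fin_cases i <;> simp [hw, Aα, Matrix.mulVec, dotProduct, Fin.sum_univ_succ]
    set w2 : Fin 4 → K := ![0, v 0, 0, v 1] with hw2
    have hw2U : w2 ∈ U1 := by
      have := hJ _ hwU
      convert this using 1
      funext i; fin_cases i <;> simp [hw, hw2, J4, Matrix.mulVec, dotProduct, Fin.sum_univ_succ]
    have hind : LinearIndependent K ![w, w2] := by
      rw [LinearIndependent.pair_iff]
      intro a b hab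
      have h0 := congrFun hab 0
      have h1 := congrFun hab 1
      have h2' := congrFun hab 2
      have h3 := congrFun hab 3
      simp [hw, hw2] at h0 h1 h2' h3
      have hcase : v 0 ≠ 0 ∨ v 1 ≠ 0 := by
        by_contra h
        push_neg at h
        exact hv0 (funext fun i => by fin_cases i <;> simp [h.1, h.2])
      rcases hcase with h | h
      · exact ⟨h0.resolve_right h, h1.resolve_right h⟩
      · exact ⟨h2'.resolve_right h, h3.resolve_right h⟩
    have hspan : Submodule.span K (Set.range ![w, w2]) ≤ U1 := by
      rw [Submodule.span_le]
      rintro x ⟨i, rfl⟩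
      fin_cases i
      · exact hwU
      · exact hw2U
    have h2le : 2 ≤ Module.finrank K U1 := by
      have := Submodule.finrank_mono hspan
      rwa [finrank_span_eq_card hind, Fintype.card_fin] at this
    omega

theorem part4 : ¬ (∀ (U1 : Submodule K (Fin 4 → K)) (U2 : Submodule K (Fin 2 → K)),
        (∀ x ∈ U1, (J4 K).mulVec x ∈ U1) →
        (∀ y ∈ U2, (Aα K ![1, 0]).mulVec y ∈ U1) →
        ¬(U1 = ⊥ ∧ U2 = ⊥) → ¬(U1 = ⊤ ∧ U2 = ⊤) →
        2 * Module.finrank K U2 < Module.finrank K U1) := by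
  intro h
  set u : Fin 2 → K := ![0,1] with hu
  set e2 : Fin 4 → K := ![0,0,1,0] with he2
  set e3 : Fin 4 → K := ![0,0,0,1] with he3
  set U1 : Submodule K (Fin 4 → K) := Submodule.span K {e2, e3} with hU1
  set U2 : Submodule K (Fin 2 → K) := Submodule.span K {u} with hU2
  have hind : LinearIndependent K ![e2, e3] := by
    rw [LinearIndependent.pair_iff]
    intro a b hab
    have h2 := congrFun hab 2
    have h3 := congrFun hab 3
    simp [he2, he3] at h2 h3
    exact ⟨h2, h3⟩
  have hr1 : Module.finrank K U1 = 2 := by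
    rw [hU1, show ({e2, e3} : Set (Fin 4 → K)) = Set.range ![e2, e3] by
      simp [Matrix.range_cons, Set.range_eq_empty]
      exact Set.pair_comm e2 e3]
    
    rw [finrank_span_eq_card hind, Fintype.card_fin]
  have hr2 : Module.finrank K U2 = 1 := by
    rw [hU2, finrank_span_singleton]
    intro h'
    have := congrFun h' 1
    simp [hu] at this
  have hJ : ∀ x ∈ U1, (J4 K).mulVec x ∈ U1 := by
    intro x hx
    rw [hU1, Submodule.mem_span_pair] at hx ⊢
    obtain ⟨c, d, rfl⟩ := hx
    refine ⟨0, c, ?_⟩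
    funext i; fin_cases i <;>
      simp [J4, he2, he3, Matrix.mulVec, dotProduct, Fin.sum_univ_succ]
  have ha : ∀ y ∈ U2, (Aα K ![1, 0]).mulVec y ∈ U1 := by
    intro y hy
    rw [hU2, Submodule.mem_span_singleton] at hy
    obtain ⟨c, rfl⟩ := hy
    rw [hU1, Submodule.mem_span_pair]
    refine ⟨c, 0, ?_⟩
    funext i; fin_cases i <;>
      simp [Aα, he2, he3, hu, Matrix.mulVec, dotProduct, Fin.sum_univ_succ]
  have hbot : ¬(U1 = ⊥ ∧ U2 = ⊥) := by
    rintro ⟨-, h2⟩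
    have : u ∈ U2 := Submodule.mem_span_singleton_self u
    rw [h2] at this
    simp at this
    have := congrFun this 1
    simp [hu] at this
  have htop : ¬(U1 = ⊤ ∧ U2 = ⊤) := by
    rintro ⟨h1, -⟩
    have : Module.finrank K U1 = 4 := by rw [h1]; simp [Module.finrank_fin_fun]
    omega
  have := h U1 U2 hJ ha hbot htop
  omega

theorem part2 :
    (∃ (ι1 : Matrix (Fin 4) (Fin 2) K) (ι2 : Matrix (Fin 2) (Fin 1) K)
       (π1 : Matrix (Fin 2) (Fin 4) K) (π2 : Matrix (Fin 1) (Fin 2) K),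
        ι1 * J2 K = J4 K * ι1 ∧ ι1 * aInf K = Aα K ![1, 0] * ι2 ∧
        π1 * J4 K = J2 K * π1 ∧ π1 * Aα K ![1, 0] = aInf K * π2 ∧
        Function.Injective ι1.mulVecLin ∧ Function.Injective ι2.mulVecLin ∧
        Function.Surjective π1.mulVecLin ∧ Function.Surjective π2.mulVecLin ∧
        LinearMap.range ι1.mulVecLin = LinearMap.ker π1.mulVecLin ∧
        LinearMap.range ι2.mulVecLin = LinearMap.ker π2.mulVecLin ∧
        ¬ ∃ (s1 : Matrix (Fin 4) (Fin 2) K) (s2 : Matrix (Fin 2) (Fin 1) K),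
            s1 * J2 K = J4 K * s1 ∧ s1 * aInf K = Aα K ![1, 0] * s2 ∧
            π1 * s1 = 1 ∧ π2 * s2 = 1) := by
  refine ⟨!![0,0;0,0;1,0;0,1], !![0;1], !![1,0,0,0;0,1,0,0], !![1,0],
    ?_, ?_, ?_, ?_, ?_, ?_, ?_, ?_, ?_, ?_, ?_⟩
  · ext i j; fin_cases i <;> fin_cases j <;>
      simp [J2, J4, Matrix.mul_apply, Fin.sum_univ_succ]
  · ext i j; fin_cases i <;> fin_cases j <;>
      simp [aInf, Aα, Matrix.mul_apply, Fin.sum_univ_succ]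
  · ext i j; fin_cases i <;> fin_cases j <;>
      simp [J2, J4, Matrix.mul_apply, Fin.sum_univ_succ]
  · ext i j; fin_cases i <;> fin_cases j <;>
      simp [aInf, Aα, Matrix.mul_apply, Fin.sum_univ_succ]
  · intro x y hxy
    have h2 := congrFun hxy 2
    have h3 := congrFun hxy 3
    simp [Matrix.mulVecLin, Matrix.mulVec, dotProduct, Fin.sum_univ_succ] at h2 h3
    funext i; fin_cases i
    · exact h2
    · exact h3
  · intro x y hxy
    have h1 := congrFun hxy 1
    simp [Matrix.mulVecLin, Matrix.mulVec, dotProduct, Fin.sum_univ_succ] at h1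
    funext i; fin_cases i
    · exact h1
  · intro y
    refine ⟨![y 0, y 1, 0, 0], ?_⟩
    funext i; fin_cases i <;>
      simp [Matrix.mulVecLin, Matrix.mulVec, dotProduct, Fin.sum_univ_succ]
  · intro y
    refine ⟨![y 0, 0], ?_⟩
    funext i; fin_cases i <;>
      simp [Matrix.mulVecLin, Matrix.mulVec, dotProduct, Fin.sum_univ_succ]
  · ext x
    simp only [LinearMap.mem_range, LinearMap.mem_ker]
    constructor
    · rintro ⟨y, rfl⟩
      funext i; fin_cases i <;>
        simp [Matrix.mulVecLin, Matrix.mulVec, dotProduct, Fin.sum_univ_succ]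
    · intro hx
      have h0 := congrFun hx 0
      have h1 := congrFun hx 1
      simp [Matrix.mulVecLin, Matrix.mulVec, dotProduct, Fin.sum_univ_succ] at h0 h1
      refine ⟨![x 2, x 3], ?_⟩
      funext i; fin_cases i <;>
        simp [Matrix.mulVecLin, Matrix.mulVec, dotProduct, Fin.sum_univ_succ, h0, h1]
  · ext x
    simp only [LinearMap.mem_range, LinearMap.mem_ker]
    constructor
    · rintro ⟨y, rfl⟩
      funext i; fin_cases i <;>
        simp [Matrix.mulVecLin, Matrix.mulVec, dotProduct, Fin.sum_univ_succ]
    · intro hx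
      have h0 := congrFun hx 0
      simp [Matrix.mulVecLin, Matrix.mulVec, dotProduct, Fin.sum_univ_succ] at h0
      refine ⟨![x 1], ?_⟩
      funext i; fin_cases i <;>
        simp [Matrix.mulVecLin, Matrix.mulVec, dotProduct, Fin.sum_univ_succ, h0]
  · rintro ⟨s1, s2, hs1, hs2, hp1, hp2⟩
    have hd : s1 1 1 = 1 := by
      have := congrFun (congrFun hp1 1) 1
      simpa [Matrix.mul_apply, Fin.sum_univ_succ] using this
    have hz : (0 : K) = s1 1 1 := by
      have := congrFun (congrFun hs1 2) 1
      simpa [J2, J4, Matrix.mul_apply, Fin.sum_univ_succ] using this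
    rw [hd] at hz
    exact zero_ne_one hz

/-- V̄_∞ is ∂-stable, there is a non-split short exact sequence
0 → V̄_∞ → V_∞ → V̄_∞ → 0 with V_∞ = V_{(1:0)}, and V_∞ is ∂-semistable but
not ∂-stable. -/
theorem stmt_8 [IsAlgClosed K] [CharZero K] :
    -- V̄_∞ is ∂-stable
    (∀ (U1 : Submodule K (Fin 2 → K)) (U2 : Submodule K (Fin 1 → K)),
        (∀ x ∈ U1, (J2 K).mulVec x ∈ U1) → (∀ y ∈ U2, (aInf K).mulVec y ∈ U1) →
        ¬(U1 = ⊥ ∧ U2 = ⊥) → ¬(U1 = ⊤ ∧ U2 = ⊤) →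
        2 * Module.finrank K U2 < Module.finrank K U1)
    ∧ -- non-split short exact sequence 0 → V̄_∞ → V_∞ → V̄_∞ → 0
    (∃ (ι1 : Matrix (Fin 4) (Fin 2) K) (ι2 : Matrix (Fin 2) (Fin 1) K)
       (π1 : Matrix (Fin 2) (Fin 4) K) (π2 : Matrix (Fin 1) (Fin 2) K),
        ι1 * J2 K = J4 K * ι1 ∧ ι1 * aInf K = Aα K ![1, 0] * ι2 ∧
        π1 * J4 K = J2 K * π1 ∧ π1 * Aα K ![1, 0] = aInf K * π2 ∧
        Function.Injective ι1.mulVecLin ∧ Function.Injective ι2.mulVecLin ∧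
        Function.Surjective π1.mulVecLin ∧ Function.Surjective π2.mulVecLin ∧
        LinearMap.range ι1.mulVecLin = LinearMap.ker π1.mulVecLin ∧
        LinearMap.range ι2.mulVecLin = LinearMap.ker π2.mulVecLin ∧
        ¬ ∃ (s1 : Matrix (Fin 4) (Fin 2) K) (s2 : Matrix (Fin 2) (Fin 1) K),
            s1 * J2 K = J4 K * s1 ∧ s1 * aInf K = Aα K ![1, 0] * s2 ∧
            π1 * s1 = 1 ∧ π2 * s2 = 1)
    ∧ -- V_∞ is ∂-semistable
    (∀ (U1 : Submodule K (Fin 4 → K)) (U2 : Submodule K (Fin 2 → K)),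
        (∀ x ∈ U1, (J4 K).mulVec x ∈ U1) →
        (∀ y ∈ U2, (Aα K ![1, 0]).mulVec y ∈ U1) →
        2 * Module.finrank K U2 ≤ Module.finrank K U1)
    ∧ -- but V_∞ is not ∂-stable
    ¬ (∀ (U1 : Submodule K (Fin 4 → K)) (U2 : Submodule K (Fin 2 → K)),
        (∀ x ∈ U1, (J4 K).mulVec x ∈ U1) →
        (∀ y ∈ U2, (Aα K ![1, 0]).mulVec y ∈ U1) →
        ¬(U1 = ⊥ ∧ U2 = ⊥) → ¬(U1 = ⊤ ∧ U2 = ⊤) →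
        2 * Module.finrank K U2 < Module.finrank K U1) := by
  exact ⟨part1 K, part2 K, part3 K, part4 K⟩

end
end

section
/- Let H = KQ/(ε⁴) of type ℬ𝒞̃₁ and let V ∈ mod(H) be ∂-stable. Then the dimension vector of V is (2,1) or (4,2); moreover V ≅ V̄_∞ or V ≅ V_λ for some λ ∈ 𝔸¹. -/
noncomputable section

open Matrix Module Polynomial

private lemma aux_pow_finrank_zero {K V : Type*} [Field K] [AddCommGroup V] [Module K V]
    [FiniteDimensional K V] (φ : Module.End K V) (h : IsNilpotent φ) :
    φ ^ Module.finrank K V = 0 := by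
  have h2 := (LinearMap.isNilpotent_iff_charpoly φ).mp h
  have h3 := LinearMap.aeval_self_charpoly φ
  rw [h2] at h3
  simpa using h3

private lemma aux_finrank_span_pair_le {K V : Type*} [Field K] [AddCommGroup V] [Module K V]
    (x y : V) : Module.finrank K (Submodule.span K ({x, y} : Set V)) ≤ 2 := by
  classical
  refine (finrank_span_le_card _).trans ?_
  rw [Set.toFinset_insert, Set.toFinset_singleton]
  exact (Finset.card_insert_le _ _).trans (by simp)

variable (K : Type*) [Field K]

set_option maxHeartbeats 1000000 in
/-- every ∂-stable H-module V (a nonzero representation with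
dim V(1) = 2 dim V(2) and 2 dim U(2) < dim U(1) for all proper nonzero
subrepresentations U) has dimension vector (2,1) or (4,2), and is isomorphic to
V̄_∞ or to V_λ for some λ ∈ 𝔸¹. -/
theorem stmt_11 [IsAlgClosed K] [CharZero K]
    (d1 d2 : ℕ) (hne : ¬(d1 = 0 ∧ d2 = 0))
    (E : Matrix (Fin d1) (Fin d1) K) (hE : E ^ 4 = 0)
    (B : Matrix (Fin d1) (Fin d2) K)
    (hdim : d1 = 2 * d2)
    (hstab : ∀ (U1 : Submodule K (Fin d1 → K)) (U2 : Submodule K (Fin d2 → K)),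
      (∀ x ∈ U1, E.mulVec x ∈ U1) → (∀ y ∈ U2, B.mulVec y ∈ U1) →
      ¬(U1 = ⊥ ∧ U2 = ⊥) → ¬(U1 = ⊤ ∧ U2 = ⊤) →
      2 * Module.finrank K U2 < Module.finrank K U1) :
    ((d1 = 2 ∧ d2 = 1) ∨ (d1 = 4 ∧ d2 = 2))
    ∧ ((∃ (e1 : (Fin d1 → K) ≃ₗ[K] (Fin 2 → K)) (e2 : (Fin d2 → K) ≃ₗ[K] (Fin 1 → K)),
          (∀ x, e1 (E.mulVec x) = (J2 K).mulVec (e1 x)) ∧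
          (∀ y, e1 (B.mulVec y) = (aInf K).mulVec (e2 y)))
      ∨ (∃ (lam : K) (e1 : (Fin d1 → K) ≃ₗ[K] (Fin 4 → K))
            (e2 : (Fin d2 → K) ≃ₗ[K] (Fin 2 → K)),
          (∀ x, e1 (E.mulVec x) = (J4 K).mulVec (e1 x)) ∧
          (∀ y, e1 (B.mulVec y) = (Aα K ![lam, 1]).mulVec (e2 y)))) := by
  classical
  have hd2 : d2 ≠ 0 := by rintro rfl; exact hne ⟨by omega, rfl⟩
  have hd2pos : 0 < d2 := Nat.pos_of_ne_zero hd2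
  have hd1pos : 0 < d1 := by omega
  haveI : Nonempty (Fin d1) := Fin.pos_iff_nonempty.mp hd1pos
  haveI : Nonempty (Fin d2) := Fin.pos_iff_nonempty.mp hd2pos
  set f : (Fin d1 → K) →ₗ[K] (Fin d1 → K) := Matrix.toLinAlgEquiv' E with hfdef
  set g : (Fin d2 → K) →ₗ[K] (Fin d1 → K) := Matrix.mulVecLin B with hgdef
  have hfE : ∀ x, E.mulVec x = f x := fun x => (Matrix.toLinAlgEquiv'_apply E x).symm
  have hgB : ∀ y, B.mulVec y = g y := fun y => rfl
  have hf4' : f ^ 4 = 0 := by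
    rw [hfdef, ← map_pow, hE, map_zero]
  have hf4 : ∀ x, f (f (f (f x))) = 0 := by
    intro x
    have := congrArg (fun φ => φ x) hf4'
    simpa [pow_succ, Module.End.mul_apply] using this
  have hstab' : ∀ (U1 : Submodule K (Fin d1 → K)) (U2 : Submodule K (Fin d2 → K)),
      (∀ x ∈ U1, f x ∈ U1) → (∀ y ∈ U2, g y ∈ U1) →
      ¬(U1 = ⊥ ∧ U2 = ⊥) → ¬(U1 = ⊤ ∧ U2 = ⊤) →
      2 * Module.finrank K U2 < Module.finrank K U1 := by
    intro U1 U2 h1 h2 hb ht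
    refine hstab U1 U2 ?_ ?_ hb ht
    · intro x hx; rw [hfE]; exact h1 x hx
    · intro y hy; rw [hgB]; exact h2 y hy
  -- injectivity of g
  have hginj : Function.Injective g := by
    rw [← LinearMap.ker_eq_bot]
    by_contra hker
    have hcon := hstab' ⊥ (LinearMap.ker g)
      (by intro x hx; rw [Submodule.mem_bot] at hx; simp [hx])
      (by intro y hy; rw [LinearMap.mem_ker] at hy; simp [hy])
      (fun h => hker h.2)
      (fun h => absurd h.1 bot_ne_top)
    rw [finrank_bot] at hcon
    omega
  rcases Nat.lt_or_ge d2 2 with hd2lt | hd2ge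
  · -- case d2 = 1
    have h1 : d2 = 1 := by omega
    subst h1
    have h2 : d1 = 2 := by omega
    subst h2
    set w : Fin 2 → K := g (fun _ => 1) with hwdef
    have hone : (fun _ => (1:K) : Fin 1 → K) ≠ 0 := by
      intro h
      have := congrFun h 0
      simp at this
    have hw0 : w ≠ 0 := by
      intro h
      exact hone (hginj (by rw [← hwdef, h, map_zero]))
    have hgy : ∀ y : Fin 1 → K, g y = y 0 • w := by
      intro y
      have hy : y = y 0 • (fun _ => (1:K)) := by
        funext i; fin_cases i; simp
      rw [hwdef, ← _root_.map_smul, ← hy]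
    have hfw : f w ≠ 0 := by
      intro h0
      have hcon := hstab' (Submodule.span K {w}) ⊤
        (by
          intro x hx
          rcases Submodule.mem_span_singleton.mp hx with ⟨α, rfl⟩
          rw [_root_.map_smul, h0, smul_zero]
          exact Submodule.zero_mem _)
        (by
          intro y _
          rw [hgy y]
          exact Submodule.smul_mem _ _ (Submodule.mem_span_singleton_self w))
        (fun h => absurd h.2.symm bot_ne_top)
        (by
          rintro ⟨h, -⟩
          have hx := finrank_span_singleton (K := K) hw0
          rw [h, finrank_top, Module.finrank_fin_fun] at hx
          omega)
      have e1 : Module.finrank K (⊤ : Submodule K (Fin 1 → K)) = 1 := by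
        rw [finrank_top, Module.finrank_fin_fun]
      have e2 : Module.finrank K (Submodule.span K ({w} : Set (Fin 2 → K))) = 1 :=
        finrank_span_singleton hw0
      omega
    have hff : ∀ x, f (f x) = 0 := by
      have hnil : IsNilpotent f := ⟨4, hf4'⟩
      have h2 := aux_pow_finrank_zero f hnil
      rw [Module.finrank_fin_fun] at h2
      intro x
      have := congrArg (fun φ => φ x) h2
      simpa [pow_succ, Module.End.mul_apply] using this
    have li : LinearIndependent K ![w, f w] := by
      rw [LinearIndependent.pair_iff]
      intro s t hst
      have h1 : s • f w = 0 := by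
        have := congrArg f hst
        simpa [map_add, _root_.map_smul, hff] using this
      have hs : s = 0 := by
        rcases smul_eq_zero.mp h1 with h | h
        · exact h
        · exact absurd h hfw
      subst hs
      simp only [zero_smul, zero_add] at hst
      rcases smul_eq_zero.mp hst with h | h
      · exact ⟨rfl, h⟩
      · exact absurd h hfw
    have hcard : Fintype.card (Fin 2) = Module.finrank K (Fin 2 → K) := by
      simp [Module.finrank_fin_fun]
    set b1 : Basis (Fin 2) K (Fin 2 → K) := basisOfLinearIndependentOfCardEqFinrank li hcard
      with hb1def
    have hb1 : ∀ i, b1 i = ![w, f w] i := fun i => by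
      rw [hb1def, coe_basisOfLinearIndependentOfCardEqFinrank]
    have h0 : b1 0 = w := by rw [hb1 0]; simp
    have h1 : b1 1 = f w := by rw [hb1 1]; simp
    set e1 := b1.equivFun with he1def
    refine ⟨Or.inl ⟨rfl, rfl⟩, Or.inl ⟨e1, LinearEquiv.refl K (Fin 1 → K), ?_, ?_⟩⟩
    · -- ε-action
      have key : (e1 : (Fin 2 → K) →ₗ[K] (Fin 2 → K)).comp f
          = (Matrix.mulVecLin (J2 K)).comp (e1 : (Fin 2 → K) →ₗ[K] (Fin 2 → K)) := by
        apply b1.ext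
        simp only [LinearMap.coe_comp, Function.comp_apply, LinearEquiv.coe_coe,
          Matrix.mulVecLin_apply]
        rw [Fin.forall_fin_two]
        constructor
        · have hfb0 : f (b1 0) = b1 1 := by rw [h0, h1]
          rw [hfb0]
          funext j
          fin_cases j <;>
            simp [he1def, Basis.equivFun_self, J2, Matrix.mulVec, dotProduct,
              Fin.sum_univ_two]
        · have hfb1 : f (b1 1) = 0 := by rw [h1]; exact hff w
          rw [hfb1, map_zero]
          funext j
          fin_cases j <;>
            simp [he1def, Basis.equivFun_self, J2, Matrix.mulVec, dotProduct,
              Fin.sum_univ_two]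
      intro x
      rw [hfE]
      have := congrArg (fun L => L x) key
      simpa [Matrix.mulVecLin_apply] using this
    · -- α-action
      intro y
      rw [hgB, hgy y, show w = b1 0 from h0.symm, _root_.map_smul]
      funext j
      fin_cases j <;>
        simp [he1def, Basis.equivFun_self, aInf, Matrix.mulVec, dotProduct,
          Fin.sum_univ_one, mul_comm]
  · -- case d2 ≥ 2
    -- L1: the key "lines" lemma
    have hL1 : ∀ v : Fin d2 → K, v ≠ 0 → f (f (g v)) ≠ 0 := by
      intro v hv h0
      set U1 := Submodule.span K {g v, f (g v)} with hU1def
      have h1 : ∀ x ∈ U1, f x ∈ U1 := by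
        intro x hx
        rcases Submodule.mem_span_pair.mp hx with ⟨α, β, rfl⟩
        have hfx : f (α • g v + β • f (g v)) = α • f (g v) := by
          rw [_root_.map_add, _root_.map_smul, _root_.map_smul, h0, smul_zero, add_zero]
        rw [hfx]
        exact Submodule.mem_span_pair.mpr ⟨0, α, by rw [zero_smul, zero_add]⟩
      have h2 : ∀ y ∈ Submodule.span K ({v} : Set (Fin d2 → K)), g y ∈ U1 := by
        intro y hy
        rcases Submodule.mem_span_singleton.mp hy with ⟨α, rfl⟩
        rw [_root_.map_smul]
        exact Submodule.mem_span_pair.mpr ⟨α, 0, by rw [zero_smul, add_zero]⟩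
      have hb : ¬(U1 = ⊥ ∧ Submodule.span K ({v} : Set (Fin d2 → K)) = ⊥) := by
        rintro ⟨-, h⟩
        exact hv (Submodule.span_singleton_eq_bot.mp h)
      have ht : ¬(U1 = ⊤ ∧ Submodule.span K ({v} : Set (Fin d2 → K)) = ⊤) := by
        rintro ⟨-, h⟩
        have hx := finrank_span_singleton (K := K) hv
        rw [h, finrank_top, Module.finrank_fin_fun] at hx
        omega
      have hr2 : Module.finrank K (Submodule.span K ({v} : Set (Fin d2 → K))) = 1 :=
        finrank_span_singleton (K := K) hv
      have hr1 := aux_finrank_span_pair_le (K := K) (g v) (f (g v))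
      rw [← hU1def] at hr1
      have := hstab' U1 (Submodule.span K ({v} : Set (Fin d2 → K))) h1 h2 hb ht
      omega
    -- the decomposition machinery
    set ph : (Fin d2 → K) →ₗ[K] (Fin d1 → K) := f ∘ₗ (f ∘ₗ g) with hphdef
    have hph : ∀ v, ph v = f (f (g v)) := fun v => rfl
    have hphinj : ∀ v, ph v = 0 → v = 0 := by
      intro v h
      by_contra hv
      exact hL1 v hv (by rw [← hph v]; exact h)
    set Phi : ((Fin d2 → K) × (Fin d2 → K)) →ₗ[K] (Fin d1 → K) := g.coprod ph with hPhidef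
    have hPhiapp : ∀ p : (Fin d2 → K) × (Fin d2 → K), Phi p = g p.1 + ph p.2 := fun p => rfl
    have hPhiinj : Function.Injective Phi := by
      rw [← LinearMap.ker_eq_bot]
      apply LinearMap.ker_eq_bot'.mpr
      rintro ⟨u, v⟩ h
      rw [hPhiapp] at h
      have h2 : ph u = 0 := by
        have h3 := congrArg (fun x => f (f x)) h
        simp only [_root_.map_add, map_zero] at h3
        have hz : f (f (ph v)) = 0 := hf4 (g v)
        rw [hz, add_zero] at h3
        exact h3
      have hu : u = 0 := hphinj u h2
      rw [hu, map_zero, zero_add] at h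
      have hv : v = 0 := hphinj v h
      rw [hu, hv]
      rfl
    have hfinrk : Module.finrank K ((Fin d2 → K) × (Fin d2 → K))
        = Module.finrank K (Fin d1 → K) := by
      rw [Module.finrank_prod, Module.finrank_fin_fun, Module.finrank_fin_fun]
      omega
    set Pe := Phi.linearEquivOfInjective hPhiinj hfinrk with hPedef
    have hPe : ∀ p, Pe p = Phi p :=
      fun p => LinearMap.linearEquivOfInjective_apply hPhiinj hfinrk p
    set a : (Fin d2 → K) →ₗ[K] (Fin d2 → K) :=
      (LinearMap.fst K (Fin d2 → K) (Fin d2 → K)) ∘ₗ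
        ((Pe.symm : (Fin d1 → K) →ₗ[K] ((Fin d2 → K) × (Fin d2 → K))) ∘ₗ (f ∘ₗ g)) with hadef
    set c : (Fin d2 → K) →ₗ[K] (Fin d2 → K) :=
      (LinearMap.snd K (Fin d2 → K) (Fin d2 → K)) ∘ₗ
        ((Pe.symm : (Fin d1 → K) →ₗ[K] ((Fin d2 → K) × (Fin d2 → K))) ∘ₗ (f ∘ₗ g)) with hcdef
    have hdec : ∀ u, f (g u) = g (a u) + ph (c u) := by
      intro u
      have h1 : Pe (Pe.symm (f (g u))) = f (g u) := Pe.apply_symm_apply _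
      rw [hPe] at h1
      calc f (g u) = Phi (Pe.symm (f (g u))) := h1.symm
        _ = g (a u) + ph (c u) := rfl
    have huniq : ∀ u v u' v' : Fin d2 → K, g u + ph v = g u' + ph v' → u = u' ∧ v = v' := by
      intro u v u' v' h
      have h2 : Phi (u, v) = Phi (u', v') := by rw [hPhiapp, hPhiapp]; exact h
      have h3 := hPhiinj h2
      exact ⟨congrArg Prod.fst h3, congrArg Prod.snd h3⟩
    have hfph : ∀ v, f (ph v) = ph (a v) := by
      intro v
      have h2 : f (ph v) = f (f (f (g v))) := rfl
      rw [h2, hdec v, _root_.map_add, _root_.map_add]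
      have hz : f (f (ph (c v))) = 0 := hf4 (g (c v))
      rw [hz, add_zero]
      rfl
    have hrel : ∀ u, a (a u) = 0 ∧ c (a u) + a (c u) = u := by
      intro u
      have h1 : g 0 + ph u = g (a (a u)) + ph (c (a u) + a (c u)) := by
        rw [map_zero, zero_add]
        have h2 : ph u = f (f (g u)) := rfl
        rw [h2, hdec u, _root_.map_add, hdec (a u), hfph (c u), add_assoc,
          ← _root_.map_add ph]
      obtain ⟨h4, h5⟩ := huniq 0 u (a (a u)) (c (a u) + a (c u)) h1
      exact ⟨h4.symm, h5.symm⟩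
    have ha2 : ∀ u, a (a u) = 0 := fun u => (hrel u).1
    have hca : ∀ u, c (a u) + a (c u) = u := fun u => (hrel u).2
    -- destabilization from (a,c)-invariant subspaces
    have hdestab : ∀ T : Submodule K (Fin d2 → K), (∀ t ∈ T, a t ∈ T) → (∀ t ∈ T, c t ∈ T) →
        T ≠ ⊥ → T ≠ ⊤ → False := by
      intro T hTa hTc hTb hTt
      have h1 : ∀ x ∈ T.map g ⊔ T.map ph, f x ∈ T.map g ⊔ T.map ph := by
        intro x hx
        rcases Submodule.mem_sup.mp hx with ⟨y, hy, z, hz, rfl⟩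
        rcases Submodule.mem_map.mp hy with ⟨t, ht, rfl⟩
        rcases Submodule.mem_map.mp hz with ⟨t', ht', rfl⟩
        rw [_root_.map_add, hdec t, hfph t']
        have he : g (a t) + ph (c t) + ph (a t') = g (a t) + ph (c t + a t') := by
          rw [_root_.map_add, add_assoc]
        rw [he]
        exact Submodule.mem_sup.mpr ⟨g (a t), Submodule.mem_map_of_mem (hTa t ht),
          ph (c t + a t'), Submodule.mem_map_of_mem (T.add_mem (hTc t ht) (hTa t' ht')), rfl⟩
      have h2 : ∀ y ∈ T, g y ∈ T.map g ⊔ T.map ph :=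
        fun y hy => Submodule.mem_sup_left (Submodule.mem_map_of_mem hy)
      have h3 := Submodule.finrank_sup_add_finrank_inf_eq (T.map g) (T.map ph)
      have h4 := Submodule.finrank_map_le g T
      have h5 := Submodule.finrank_map_le ph T
      have h6 := hstab' (T.map g ⊔ T.map ph) T h1 h2 (fun h => hTb h.2) (fun h => hTt h.2)
      omega
    -- forget the heavy definitions of a, c, Pe
    clear hPedef hadef hcdef
    clear_value a c Pe
    -- commutation of c² with a
    have hcar : ∀ u, c (a u) = u - a (c u) := fun u => eq_sub_of_add_eq (hca u)
    have hzc : ∀ v, c (c (a v)) = a (c (c v)) := by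
      intro v
      rw [hcar v, _root_.map_sub, hcar (c v)]
      abel
    -- d2 = 2
    have hd2eq : d2 = 2 := by
      by_contra hne2
      have hd2ge3 : 3 ≤ d2 := by omega
      obtain ⟨μ, hμ⟩ := Module.End.exists_eigenvalue (c ∘ₗ c)
      obtain ⟨w, hw⟩ := hμ.exists_hasEigenvector
      have hww : c (c w) = μ • w := hw.apply_eq_smul
      set m : (Fin d2 → K) →ₗ[K] (Fin d2 → K) :=
        (c ∘ₗ c) - μ • (LinearMap.id : (Fin d2 → K) →ₗ[K] (Fin d2 → K)) with hmdef
      have hmem : ∀ t, t ∈ LinearMap.ker m ↔ c (c t) = μ • t := by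
        intro t
        rw [LinearMap.mem_ker, hmdef]
        simp [LinearMap.sub_apply, LinearMap.smul_apply, LinearMap.comp_apply, sub_eq_zero]
      have hT0a : ∀ t ∈ LinearMap.ker m, a t ∈ LinearMap.ker m := by
        intro t ht
        rw [hmem] at ht ⊢
        rw [hzc, ht, _root_.map_smul]
      have hT0c : ∀ t ∈ LinearMap.ker m, c t ∈ LinearMap.ker m := by
        intro t ht
        rw [hmem] at ht ⊢
        rw [ht, _root_.map_smul]
      by_cases hT0 : LinearMap.ker m = ⊤
      · have hcc : ∀ v, c (c v) = μ • v :=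
          fun v => (hmem v).mp (by rw [hT0]; exact Submodule.mem_top)
        obtain ⟨v0, hv0⟩ := exists_ne (0 : Fin d2 → K)
        have hax : ∃ x, a x ≠ 0 := by
          by_contra h
          push_neg at h
          have hz := hca v0
          rw [h v0, map_zero, h (c v0), zero_add] at hz
          exact hv0 hz.symm
        obtain ⟨x0, hx0⟩ := hax
        have haca : ∀ t, a (c (a t)) = a t := by
          intro t
          have hz := hca (a t)
          rw [ha2 t, map_zero, zero_add] at hz
          exact hz
        set s := c (a x0) with hsdef
        have has : a s = a x0 := haca x0
        have hs0 : s ≠ 0 := by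
          intro h
          apply hx0
          rw [← has, h, map_zero]
        have has0 : a s ≠ 0 := by rw [has]; exact hx0
        have hcs : c s = μ • a s := by
          rw [has]
          exact hcc (a x0)
        have hcas : c (a s) = s := by rw [has, hsdef]
        have hTa : ∀ t ∈ Submodule.span K {s, a s}, a t ∈ Submodule.span K {s, a s} := by
          intro t ht
          rcases Submodule.mem_span_pair.mp ht with ⟨α, β, rfl⟩
          rw [_root_.map_add, _root_.map_smul, _root_.map_smul, ha2 s, smul_zero, add_zero]
          exact Submodule.mem_span_pair.mpr ⟨0, α, by rw [zero_smul, zero_add]⟩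
        have hTc : ∀ t ∈ Submodule.span K {s, a s}, c t ∈ Submodule.span K {s, a s} := by
          intro t ht
          rcases Submodule.mem_span_pair.mp ht with ⟨α, β, rfl⟩
          rw [_root_.map_add, _root_.map_smul, _root_.map_smul, hcs, hcas]
          refine Submodule.mem_span_pair.mpr ⟨β, α * μ, ?_⟩
          rw [smul_smul]
          exact add_comm _ _
        have hTb : Submodule.span K {s, a s} ≠ ⊥ := by
          intro h
          apply hs0
          have hmem0 : s ∈ Submodule.span K ({s, a s} : Set (Fin d2 → K)) :=
            Submodule.subset_span (Set.mem_insert s _)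
          rw [h] at hmem0
          exact (Submodule.mem_bot K).mp hmem0
        have hTt : Submodule.span K {s, a s} ≠ ⊤ := by
          intro h
          have := aux_finrank_span_pair_le (K := K) s (a s)
          rw [h, finrank_top, Module.finrank_fin_fun] at this
          omega
        exact hdestab _ hTa hTc hTb hTt
      · have hTb : LinearMap.ker m ≠ ⊥ := by
          intro h
          have hwm : w ∈ LinearMap.ker m := (hmem w).mpr hww
          rw [h, Submodule.mem_bot] at hwm
          exact hw.2 hwm
        exact hdestab _ hT0a hT0c hTb hT0
    subst hd2eq
    have hd1eq : d1 = 4 := by omega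
    subst hd1eq
    -- final construction
    obtain ⟨ν, hν⟩ := Module.End.exists_eigenvalue c
    obtain ⟨v, hv⟩ := hν.exists_hasEigenvector
    have hcv : c v = ν • v := hv.apply_eq_smul
    have hv0 : v ≠ 0 := hv.2
    have hav : a v ≠ 0 := by
      intro h
      have h1 := hca v
      rw [h, map_zero, zero_add, hcv, _root_.map_smul, h, smul_zero] at h1
      exact hv0 h1.symm
    have li2 : LinearIndependent K ![v, a v] := by
      rw [LinearIndependent.pair_iff]
      intro s t hst
      have h1 : s • a v = 0 := by
        have := congrArg a hst
        simpa [_root_.map_add, _root_.map_smul, ha2] using this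
      have hs : s = 0 := by
        rcases smul_eq_zero.mp h1 with h | h
        · exact h
        · exact absurd h hav
      subst hs
      simp only [zero_smul, zero_add] at hst
      rcases smul_eq_zero.mp hst with h | h
      · exact ⟨rfl, h⟩
      · exact absurd h hav
    have hcard2 : Fintype.card (Fin 2) = Module.finrank K (Fin 2 → K) := by
      simp [Module.finrank_fin_fun]
    set b2 : Basis (Fin 2) K (Fin 2 → K) := basisOfLinearIndependentOfCardEqFinrank li2 hcard2
      with hb2def
    have hcoe2 : ⇑b2 = ![v, a v] := by
      rw [hb2def]; exact coe_basisOfLinearIndependentOfCardEqFinrank _ _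
    have hb2_0 : b2 0 = v := by rw [hcoe2]; simp
    have hb2_1 : b2 1 = a v := by rw [hcoe2]; simp
    set Y : Fin 4 → (Fin 4 → K) := ![g v, f (g v), ph v, ph (a v)] with hYdef
    have hY0 : g v = Phi (v, 0) := by rw [hPhiapp]; simp
    have hY1 : f (g v) = Phi (a v, ν • v) := by
      rw [hPhiapp, hdec v, hcv]
    have hY2 : ph v = Phi (0, v) := by rw [hPhiapp]; simp
    have hY3 : ph (a v) = Phi (0, a v) := by rw [hPhiapp]; simp
    have li4 : LinearIndependent K Y := by
      rw [Fintype.linearIndependent_iff]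
      intro coef hsum
      have hexp : Phi (coef 0 • (v, (0 : Fin 2 → K)) + coef 1 • (a v, ν • v)
          + coef 2 • ((0 : Fin 2 → K), v) + coef 3 • ((0 : Fin 2 → K), a v)) = 0 := by
        rw [_root_.map_add, _root_.map_add, _root_.map_add, _root_.map_smul, _root_.map_smul,
          _root_.map_smul, _root_.map_smul, ← hY0, ← hY1, ← hY2, ← hY3]
        rw [Fin.sum_univ_four] at hsum
        simpa [hYdef] using hsum
      have hz := hPhiinj (hexp.trans (map_zero Phi).symm)
      have h1 := congrArg Prod.fst hz
      have h2 := congrArg Prod.snd hz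
      simp only [Prod.fst_add, Prod.snd_add, Prod.smul_fst, Prod.smul_snd, Prod.fst_zero,
        Prod.snd_zero, smul_zero, add_zero, zero_add] at h1 h2
      obtain ⟨e0, e1⟩ := LinearIndependent.pair_iff.mp li2 _ _ h1
      rw [e1, zero_smul, zero_add] at h2
      obtain ⟨e2, e3⟩ := LinearIndependent.pair_iff.mp li2 _ _ h2
      intro i
      fin_cases i
      · exact e0
      · exact e1
      · exact e2
      · exact e3
    have hcard4 : Fintype.card (Fin 4) = Module.finrank K (Fin 4 → K) := by
      simp [Module.finrank_fin_fun]
    set b1 : Basis (Fin 4) K (Fin 4 → K) := basisOfLinearIndependentOfCardEqFinrank li4 hcard4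
      with hb1def
    have hcoe1 : ⇑b1 = Y := by
      rw [hb1def]; exact coe_basisOfLinearIndependentOfCardEqFinrank _ _
    have hb1_0 : b1 0 = g v := by rw [hcoe1, hYdef]; simp
    have hb1_1 : b1 1 = f (g v) := by rw [hcoe1, hYdef]; simp
    have hb1_2 : b1 2 = ph v := by rw [hcoe1, hYdef]; simp
    have hb1_3 : b1 3 = ph (a v) := by rw [hcoe1, hYdef]; simp
    set lam := -ν with hlamdef
    have hgav : g (a v) = b1 1 + lam • b1 2 := by
      have h1 := hdec v
      rw [hcv, _root_.map_smul] at h1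
      have h2 : g (a v) = f (g v) - ν • ph v := eq_sub_of_add_eq h1.symm
      rw [hb1_1, hb1_2, hlamdef, h2, sub_eq_add_neg, ← neg_smul]
    set e1 := b1.equivFun with he1def
    set e2 := b2.equivFun with he2def
    have hE1 : ∀ i : Fin 4, e1 (b1 i) = fun j => if i = j then (1:K) else 0 :=
      fun i => funext fun j => b1.equivFun_self i j
    have hE2 : ∀ i : Fin 2, e2 (b2 i) = fun j => if i = j then (1:K) else 0 :=
      fun i => funext fun j => b2.equivFun_self i j
    refine ⟨Or.inr ⟨rfl, rfl⟩, Or.inr ⟨lam, e1, e2, ?_, ?_⟩⟩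
    · -- ε-action of V_lam
      have key : (e1 : (Fin 4 → K) →ₗ[K] (Fin 4 → K)).comp f
          = (Matrix.mulVecLin (J4 K)).comp (e1 : (Fin 4 → K) →ₗ[K] (Fin 4 → K)) := by
        apply b1.ext
        intro i
        simp only [LinearMap.coe_comp, Function.comp_apply, LinearEquiv.coe_coe,
          Matrix.mulVecLin_apply]
        fin_cases i
        · show e1 (f (b1 0)) = (J4 K).mulVec (e1 (b1 0))
          have hstep : f (b1 0) = b1 1 := by rw [hb1_0, hb1_1]
          rw [hstep, hE1 1, hE1 0]
          funext j
          fin_cases j <;>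
            simp [J4, Matrix.mulVec, dotProduct, Fin.sum_univ_four]
        · show e1 (f (b1 1)) = (J4 K).mulVec (e1 (b1 1))
          have hstep : f (b1 1) = b1 2 := by rw [hb1_1, hb1_2]; exact (hph v).symm
          rw [hstep, hE1 2, hE1 1]
          funext j
          fin_cases j <;>
            simp [J4, Matrix.mulVec, dotProduct, Fin.sum_univ_four]
        · show e1 (f (b1 2)) = (J4 K).mulVec (e1 (b1 2))
          have hstep : f (b1 2) = b1 3 := by rw [hb1_2, hb1_3]; exact hfph v
          rw [hstep, hE1 3, hE1 2]
          funext j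
          fin_cases j <;>
            simp [J4, Matrix.mulVec, dotProduct, Fin.sum_univ_four]
        · show e1 (f (b1 3)) = (J4 K).mulVec (e1 (b1 3))
          have hstep : f (b1 3) = 0 := by
            rw [hb1_3, hfph (a v), ha2 v, map_zero]
          rw [hstep, map_zero, hE1 3]
          funext j
          fin_cases j <;>
            simp [J4, Matrix.mulVec, dotProduct, Fin.sum_univ_four]
      intro x
      rw [hfE]
      have := congrArg (fun L => L x) key
      simpa [Matrix.mulVecLin_apply] using this
    · -- α-action of V_lam
      have key : (e1 : (Fin 4 → K) →ₗ[K] (Fin 4 → K)).comp g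
          = (Matrix.mulVecLin (Aα K ![lam, 1])).comp (e2 : (Fin 2 → K) →ₗ[K] (Fin 2 → K)) := by
        apply b2.ext
        intro i
        simp only [LinearMap.coe_comp, Function.comp_apply, LinearEquiv.coe_coe,
          Matrix.mulVecLin_apply]
        fin_cases i
        · show e1 (g (b2 0)) = (Aα K ![lam, 1]).mulVec (e2 (b2 0))
          have hstep : g (b2 0) = b1 0 := by rw [hb2_0, hb1_0]
          rw [hstep, hE1 0, hE2 0]
          funext j
          fin_cases j <;>
            simp [Aα, Matrix.mulVec, dotProduct, Fin.sum_univ_two]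
        · show e1 (g (b2 1)) = (Aα K ![lam, 1]).mulVec (e2 (b2 1))
          have hstep : g (b2 1) = b1 1 + lam • b1 2 := by rw [hb2_1, hgav]
          rw [hstep, _root_.map_add, _root_.map_smul, hE1 1, hE1 2, hE2 1]
          funext j
          fin_cases j <;>
            simp [Aα, Matrix.mulVec, dotProduct, Fin.sum_univ_two]
      intro y
      rw [hgB]
      have := congrArg (fun L => L y) key
      simpa [Matrix.mulVecLin_apply] using this

end
end

section
/- Let Γ be a valued quiver with symmetrizer c and let Q̄ be its unfolded quiver with vertex set {(i,k) : i ∈ Γ₀, k ∈ ℤ/c_i} and arrows α^{(g)}_{(j,l),(i,k)} for each arrow of Γ whenever k ≡ l mod gcd(c_i,c_j). Define Π: ℤΓ₀ → ℤQ̄₀ by Π(α_i) = Σ_{k∈ℤ/c_i} e_{(i,k)}. Then Π is an isometry for the Ringel forms: ⟨Π(v), Π(w)⟩_{Q̄} = ⟨v,w⟩_Γ for all v,w ∈ ℤΓ₀. -/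
lemma count_aux (d m r : ℕ) (hr : r < d) (hm : d ∣ m) :
    (∑ l : Fin m, if (l : ℕ) % d = r then (1 : ℤ) else 0) = (m / d : ℕ) := by
  obtain ⟨q, rfl⟩ := hm
  have hdpos : 0 < d := lt_of_le_of_lt (Nat.zero_le r) hr
  rw [Nat.mul_div_cancel_left _ hdpos]
  let e : Fin q × Fin d ≃ Fin (d * q) :=
    (finProdFinEquiv).trans (finCongr (mul_comm q d))
  rw [← Equiv.sum_comp e]
  have hval : ∀ p : Fin q × Fin d, ((e p : Fin (d * q)) : ℕ) % d = (p.2 : ℕ) := by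
    intro p
    have hep : ((e p : Fin (d * q)) : ℕ) = (p.2 : ℕ) + d * (p.1 : ℕ) := rfl
    rw [hep, Nat.add_mul_mod_self_left, Nat.mod_eq_of_lt p.2.2]
  simp only [hval]
  rw [Fintype.sum_prod_type]
  have hb : ∀ a : Fin q, (∑ b : Fin d, if (b : ℕ) = r then (1 : ℤ) else 0) = 1 := by
    intro a
    have : ∀ b : Fin d, ((b : ℕ) = r) = (b = ⟨r, hr⟩) :=
      fun b => propext ⟨fun h => Fin.ext h, fun h => by rw [h]⟩
    simp only [this]
    rw [Fintype.sum_ite_eq' (⟨r, hr⟩ : Fin d) (fun _ => (1 : ℤ))]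
  rw [Finset.sum_congr rfl fun a _ => hb a]
  simp

/-- The unfolding map Π : ℤΓ₀ → ℤQ̄₀, Π(α_i) = Σ_{k ∈ ℤ/c_i} e_{(i,k)},
is an isometry from the Ringel form of a valued quiver Γ (with valuation ν and
symmetrizer c) to the Ringel form of its unfolded ordinary quiver Q̄, whose vertices
are pairs (i,k), k ∈ ℤ/c_i (modelled by Fin (c i)), and which has g_{ji} = gcd(ν_{ji},ν_{ij})
arrows (i,k) → (j,l) for each arrow i → j of Γ whenever k ≡ l mod gcd(c_i,c_j). -/
theorem stmt_17 (n : ℕ)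
    (Ω : Finset (Fin n × Fin n)) (ν : Fin n × Fin n → ℕ) (c : Fin n → ℕ)
    (hc : ∀ i, 0 < c i)
    (hloop : ∀ a ∈ Ω, a.1 ≠ a.2)
    (hsym : ∀ a ∈ Ω, c a.1 * ν a = c a.2 * ν (a.2, a.1))
    (g : Fin n × Fin n → ℕ)
    (hg : ∀ a, g a = Nat.gcd (ν a) (ν (a.2, a.1)))
    (unfold : (Fin n → ℤ) → ((i : Fin n) × Fin (c i)) → ℤ)
    (hunfold : ∀ v i k, unfold v ⟨i, k⟩ = v i)
    (RΓ : (Fin n → ℤ) → (Fin n → ℤ) → ℤ)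
    (hRΓ : ∀ v w, RΓ v w = (∑ i, (c i : ℤ) * v i * w i)
        - ∑ a ∈ Ω, (c a.1 : ℤ) * (ν a : ℤ) * v a.1 * w a.2)
    (RQ : (((i : Fin n) × Fin (c i)) → ℤ) → (((i : Fin n) × Fin (c i)) → ℤ) → ℤ)
    (hRQ : ∀ x y, RQ x y = (∑ p, x p * y p)
      - ∑ a ∈ Ω, (g a : ℤ) * ∑ k : Fin (c a.1), ∑ l : Fin (c a.2),
          (if (k : ℕ) % Nat.gcd (c a.1) (c a.2) = (l : ℕ) % Nat.gcd (c a.1) (c a.2)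
            then 1 else 0)
            * x ⟨a.1, k⟩ * y ⟨a.2, l⟩) :
    ∀ v w, RQ (unfold v) (unfold w) = RΓ v w := by
  intro v w
  rw [hRQ, hRΓ]
  congr 1
  · -- diagonal part
    rw [← Finset.univ_sigma_univ, Finset.sum_sigma]
    refine Finset.sum_congr rfl fun i _ => ?_
    simp [hunfold, Finset.sum_const, mul_assoc]
  · -- arrow part
    refine Finset.sum_congr rfl fun a ha => ?_
    simp only [hunfold]
    set d := Nat.gcd (c a.1) (c a.2) with hd
    have hdpos : 0 < d := Nat.gcd_pos_of_pos_left _ (hc a.1)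
    have hdvd : d ∣ c a.2 := Nat.gcd_dvd_right _ _
    -- key numeric identity
    have h1 : g a * c a.2 = ν a * d := by
      rw [hg]
      calc Nat.gcd (ν a) (ν (a.2, a.1)) * c a.2
          = Nat.gcd (c a.2 * ν a) (c a.2 * ν (a.2, a.1)) := by
            rw [Nat.gcd_mul_left, mul_comm]
        _ = Nat.gcd (c a.2 * ν a) (c a.1 * ν a) := by rw [hsym a ha]
        _ = ν a * d := by
            rw [Nat.gcd_mul_right, Nat.gcd_comm, hd, mul_comm]
    have hkey : g a * (c a.1 * (c a.2 / d)) = c a.1 * ν a := by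
      have h2 : g a * (c a.2 / d) = ν a := by
        obtain ⟨q, hq⟩ := hdvd
        rw [hq, Nat.mul_div_cancel_left _ hdpos]
        apply Nat.eq_of_mul_eq_mul_left hdpos
        calc d * (g a * q) = g a * (d * q) := by ring
          _ = ν a * d := by rw [← hq, h1]
          _ = d * ν a := by ring
      calc g a * (c a.1 * (c a.2 / d)) = c a.1 * (g a * (c a.2 / d)) := by ring
        _ = c a.1 * ν a := by rw [h2]
    -- count the double sum
    have hcount : (∑ k : Fin (c a.1), ∑ l : Fin (c a.2),
        (if (k : ℕ) % d = (l : ℕ) % d then (1 : ℤ) else 0) * v a.1 * w a.2)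
        = (c a.1 : ℤ) * ((c a.2 / d : ℕ) : ℤ) * (v a.1 * w a.2) := by
      have : ∀ k : Fin (c a.1), (∑ l : Fin (c a.2),
          (if (k : ℕ) % d = (l : ℕ) % d then (1 : ℤ) else 0) * v a.1 * w a.2)
          = ((c a.2 / d : ℕ) : ℤ) * (v a.1 * w a.2) := by
        intro k
        rw [← Finset.sum_mul, ← Finset.sum_mul, mul_assoc]
        congr 1
        simp_rw [eq_comm (a := (k : ℕ) % d)]
        exact count_aux d (c a.2) ((k : ℕ) % d) (Nat.mod_lt _ hdpos) hdvd
      rw [Finset.sum_congr rfl fun k _ => this k]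
      simp [mul_assoc]
    rw [hcount]
    have : ((g a : ℤ)) * ((c a.1 : ℤ) * ((c a.2 / d : ℕ) : ℤ)) = (c a.1 : ℤ) * (ν a : ℤ) := by
      exact_mod_cast congrArg (Nat.cast : ℕ → ℤ) hkey
    calc (g a : ℤ) * ((c a.1 : ℤ) * ((c a.2 / d : ℕ) : ℤ) * (v a.1 * w a.2))
        = (g a : ℤ) * ((c a.1 : ℤ) * ((c a.2 / d : ℕ) : ℤ)) * (v a.1 * w a.2) := by ring
      _ = (c a.1 : ℤ) * (ν a : ℤ) * (v a.1 * w a.2) := by rw [this]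
      _ = (c a.1 : ℤ) * (ν a : ℤ) * v a.1 * w a.2 := by ring
end
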